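/- arXiv:2302.04268 — 7 statements merged into one kernel-verified Lean document; each statement's English description precedes it below -/
import Mathlib

section
/- Let X be a finite set, 𝒰, 𝒱 ⊆ ℂ^X⊗ℂ^X quantum graphs, H a Hilbert space, and U = (U_{a,x})_{a,x∈X} a bi-unitary with entries in B(H). Then the following are equivalent. (a) For every ξ ∈ 𝒰 and every η ∈ 𝒱^⊥: ∑_{x,y,a,b∈X} conj(ξ_{x,y})·η_{a,b}·U_{a,x}U_{b,y}^* = 0, and for every ξ' ∈ 𝒱 and every η' ∈ 𝒰^⊥: ∑_{x,y,a,b∈X} η'_{x,y}·conj(ξ'_{a,b})·U_{a,x}U_{b,y}^* = 0. (b) For every ξ ∈ 𝒰, the operator U(M_ξ⊗I_H)U^* belongs to span{S⊗R : S ∈ S̃_𝒱, R ∈ B(H)}, and for every ξ' ∈ 𝒱, the operator U^t(M_{ξ'}⊗I_H)(U^t)^* belongs to span{S⊗R : S ∈ S̃_𝒰, R ∈ B(H)}. Here M_ζ := ∑_{x,y∈X} ζ_{x,y}·ε_{y,x} ∈ M_X for ζ ∈ ℂ^X⊗ℂ^X, S̃_𝒲 := {M_ζ : ζ ∈ 𝒲}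 ⊆ M_X, M⊗I_H is the block operator on the direct sum of X copies of H with (x,y) block M_{x,y}·I_H, and S⊗R is the block operator with (x,y) block S_{x,y}·R. -/
open scoped ComplexOrder
open Matrix

noncomputable section

/-- A quantum graph: a skew and symmetric subspace of `ℂ^X ⊗ ℂ^X`. -/
def IsQuantumGraph {X : Type*} [Fintype X] (U : Submodule ℂ (X × X → ℂ)) : Prop :=
  (∀ ξ ∈ U, ∑ x : X, ξ (x, x) = 0) ∧
  (∀ ξ ∈ U, (fun p : X × X => ξ (p.2, p.1)) ∈ U)

/-- A block operator matrix `U = (U_{a,x})` is a bi-unitary: both `U` and its transpose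
`U^t` are unitary. -/
def IsBiunitary {X : Type*} [Fintype X] [DecidableEq X]
    {H : Type*} [NormedAddCommGroup H] [InnerProductSpace ℂ H] [CompleteSpace H]
    (U : X → X → (H →L[ℂ] H)) : Prop :=
  (∀ x x' : X, ∑ a : X, ContinuousLinearMap.adjoint (U a x) ∘L U a x' =
      if x = x' then (1 : H →L[ℂ] H) else 0) ∧
  (∀ a a' : X, ∑ x : X, U a x ∘L ContinuousLinearMap.adjoint (U a' x) =
      if a = a' then (1 : H →L[ℂ] H) else 0) ∧
  (∀ a a' : X, ∑ x : X, ContinuousLinearMap.adjoint (U x a) ∘L U x a' =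
      if a = a' then (1 : H →L[ℂ] H) else 0) ∧
  (∀ x x' : X, ∑ a : X, U x a ∘L ContinuousLinearMap.adjoint (U x' a) =
      if x = x' then (1 : H →L[ℂ] H) else 0)

namespace QGAux

set_option linter.unusedSectionVars false

variable {ι : Type*} [Fintype ι] [DecidableEq ι]

/-- The "entrywise conjugate" of a submodule of `ι → ℂ`. -/
def starSub (V : Submodule ℂ (ι → ℂ)) : Submodule ℂ (ι → ℂ) where
  carrier := {x | (fun p => (starRingEnd ℂ) (x p)) ∈ V}
  add_mem' := by
    intro a b ha hb
    show (fun p => (starRingEnd ℂ) ((a + b) p)) ∈ V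
    have h : (fun p => (starRingEnd ℂ) ((a + b) p))
        = (fun p => (starRingEnd ℂ) (a p)) + fun p => (starRingEnd ℂ) (b p) := by
      funext p; simp
    rw [h]; exact V.add_mem ha hb
  zero_mem' := by
    show (fun p => (starRingEnd ℂ) ((0 : ι → ℂ) p)) ∈ V
    have h : (fun p : ι => (starRingEnd ℂ) ((0 : ι → ℂ) p)) = 0 := by funext p; simp
    rw [h]; exact V.zero_mem
  smul_mem' := by
    intro c x hx
    show (fun p => (starRingEnd ℂ) ((c • x) p)) ∈ V
    have h : (fun p => (starRingEnd ℂ) ((c • x) p))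
        = (starRingEnd ℂ) c • fun p => (starRingEnd ℂ) (x p) := by
      funext p; simp
    rw [h]; exact V.smul_mem _ hx

/-- **Duality.** A vector-valued family lies in `V̄ ⊗ M` iff its contraction with every
vector orthogonal to `V` vanishes. -/
theorem core {M : Type*} [AddCommGroup M] [Module ℂ M]
    (V : Submodule ℂ (ι → ℂ)) (W : ι → M) :
    (∀ η : ι → ℂ, (∀ ζ ∈ V, ∑ p, (starRingEnd ℂ) (ζ p) * η p = 0) →
        ∑ p, η p • W p = 0) ↔
      W ∈ Submodule.span ℂ
        {w : ι → M | ∃ ζ ∈ V, ∃ R : M, w = fun p => (starRingEnd ℂ) (ζ p) • R} := by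
  constructor
  · intro h
    obtain ⟨q, hq⟩ := Submodule.exists_isCompl (starSub V)
    set P : (ι → ℂ) →ₗ[ℂ] (ι → ℂ) :=
      (starSub V).subtype ∘ₗ (starSub V).linearProjOfIsCompl q hq with hPdef
    have hPmem : ∀ x, P x ∈ starSub V := fun x =>
      (((starSub V).linearProjOfIsCompl q hq) x).2
    have hPfix : ∀ x ∈ starSub V, P x = x := by
      intro x hx
      have h1 := Submodule.linearProjOfIsCompl_apply_left hq ⟨x, hx⟩
      have := congrArg (Submodule.subtype (starSub V)) h1
      rw [hPdef]; exact congrArg Subtype.val h1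
    have key : ∀ p, ∑ r, (P (Pi.single r 1)) p • W r = W p := by
      intro p
      have hann : ∀ ζ ∈ V, ∑ r, (starRingEnd ℂ) (ζ r) *
          ((Pi.single r (1 : ℂ) : ι → ℂ) p - (P (Pi.single r 1)) p) = 0 := by
        intro ζ hζ
        have h1 : ∑ r, (starRingEnd ℂ) (ζ r) * (Pi.single r (1 : ℂ) : ι → ℂ) p
            = (starRingEnd ℂ) (ζ p) := by
          simp [Pi.single_apply]
        have hsum : ∑ r, (starRingEnd ℂ) (ζ r) • (Pi.single r (1 : ℂ) : ι → ℂ)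
            = fun s => (starRingEnd ℂ) (ζ s) := by
          funext s
          simp [Finset.sum_apply, Pi.single_apply]
        have hmem : (fun s => (starRingEnd ℂ) (ζ s)) ∈ starSub V := by
          show (fun p => (starRingEnd ℂ) ((starRingEnd ℂ) (ζ p))) ∈ V
          simpa [Complex.conj_conj] using hζ
        have h2 : ∑ r, (starRingEnd ℂ) (ζ r) * (P (Pi.single r 1)) p
            = (starRingEnd ℂ) (ζ p) := by
          have heq : ∑ r, (starRingEnd ℂ) (ζ r) * (P (Pi.single r 1)) p
              = (P (∑ r, (starRingEnd ℂ) (ζ r) • (Pi.single r (1 : ℂ) : ι → ℂ))) p := by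
            rw [map_sum, Finset.sum_apply]
            refine Finset.sum_congr rfl fun r _ => ?_
            rw [_root_.map_smul]
            simp
          rw [heq, hsum, hPfix _ hmem]
        simp only [mul_sub]
        rw [Finset.sum_sub_distrib, h1, h2, sub_self]
      have h0 := h _ hann
      have hsplit : ∑ r, ((Pi.single r (1 : ℂ) : ι → ℂ) p - (P (Pi.single r 1)) p) • W r
          = ∑ r, (Pi.single r (1 : ℂ) : ι → ℂ) p • W r
            - ∑ r, (P (Pi.single r 1)) p • W r := by
        simp [sub_smul, Finset.sum_sub_distrib]
      have hWp : ∑ r, (Pi.single r (1 : ℂ) : ι → ℂ) p • W r = W p := by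
        simp [Pi.single_apply, ite_smul]
      rw [hsplit, hWp] at h0
      exact (sub_eq_zero.mp h0).symm
    have hW : W = ∑ r, (fun p => (P (Pi.single r 1)) p • W r) := by
      funext p
      rw [Finset.sum_apply]
      exact (key p).symm
    rw [hW]
    refine Submodule.sum_mem _ fun r _ => Submodule.subset_span ?_
    refine ⟨fun s => (starRingEnd ℂ) ((P (Pi.single r 1)) s), hPmem _, W r, ?_⟩
    funext p; simp
  · intro hW η hη
    induction hW using Submodule.span_induction with
    | mem w hw =>
      obtain ⟨ζ, hζ, R, rfl⟩ := hw
      have heq : ∑ p, η p • ((starRingEnd ℂ) (ζ p) • R)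
          = (∑ p, (starRingEnd ℂ) (ζ p) * η p) • R := by
        rw [Finset.sum_smul]
        exact Finset.sum_congr rfl fun p _ => by rw [smul_smul, mul_comm]
      rw [heq, hη ζ hζ, zero_smul]
    | zero => simp
    | add x y _ _ hx hy => simp [smul_add, Finset.sum_add_distrib, hx, hy]
    | smul c x _ hx =>
      have heq : ∑ p, η p • (c • x) p = c • ∑ p, η p • x p := by
        rw [Finset.smul_sum]
        exact Finset.sum_congr rfl fun p _ => smul_comm _ _ _
      rw [heq, hx, smul_zero]

theorem conj_map_span {M N : Type*} [AddCommGroup M] [Module ℂ M]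
    [AddCommGroup N] [Module ℂ N]
    (f : M → N) (hadd : ∀ x y, f (x + y) = f x + f y)
    (hsmul : ∀ (c : ℂ) (x : M), f (c • x) = (starRingEnd ℂ) c • f x)
    (S : Set M) (T : Submodule ℂ N) (hS : ∀ s ∈ S, f s ∈ T) :
    ∀ x ∈ Submodule.span ℂ S, f x ∈ T := by
  have h0 : f 0 = 0 := by simpa using hsmul 0 0
  intro x hx
  induction hx using Submodule.span_induction with
  | mem s hs => exact hS s hs
  | zero => rw [h0]; exact T.zero_mem
  | add x y _ _ hx hy => rw [hadd]; exact T.add_mem hx hy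
  | smul c x _ hx => rw [hsmul]; exact T.smul_mem _ hx

variable {X : Type*} [Fintype X] [DecidableEq X]
variable {H : Type*} [NormedAddCommGroup H] [InnerProductSpace ℂ H] [CompleteSpace H]

theorem sum4_comm {β : Type*} [AddCommMonoid β] (F : X → X → X → X → β) :
    ∑ x : X, ∑ y : X, ∑ a : X, ∑ b : X, F x y a b
      = ∑ a : X, ∑ b : X, ∑ x : X, ∑ y : X, F x y a b := by
  have h : ∀ (G : X → X → X → X → β), ∑ x : X, ∑ y : X, ∑ a : X, ∑ b : X, G x y a b
      = ∑ p : X × X, ∑ q : X × X, G p.1 p.2 q.1 q.2 := by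
    intro G
    have hin : ∀ x y, ∑ a : X, ∑ b : X, G x y a b = ∑ q : X × X, G x y q.1 q.2 :=
      fun x y => (Fintype.sum_prod_type' _).symm
    simp_rw [hin]
    exact (Fintype.sum_prod_type' (f := fun x y => ∑ q : X × X, G x y q.1 q.2)).symm
  rw [h, h fun a b x y => F x y a b]
  exact Finset.sum_comm

/-- Blockwise adjoint-flip, from curried to uncurried block matrices. -/
def Amap (W : X → X → (H →L[ℂ] H)) : X × X → (H →L[ℂ] H) :=
  fun p => ContinuousLinearMap.adjoint (W p.2 p.1)

/-- Blockwise adjoint-flip, from uncurried to curried block matrices. -/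
def Bmap (w : X × X → (H →L[ℂ] H)) : X → X → (H →L[ℂ] H) :=
  fun a b => ContinuousLinearMap.adjoint (w (b, a))

theorem Amap_Bmap (w : X × X → (H →L[ℂ] H)) : Amap (Bmap w) = w := by
  funext p
  simp [Amap, Bmap, ContinuousLinearMap.adjoint_adjoint]

theorem Amap_add (W W' : X → X → (H →L[ℂ] H)) : Amap (W + W') = Amap W + Amap W' := by
  funext p; simp [Amap, map_add]

theorem Amap_smul (c : ℂ) (W : X → X → (H →L[ℂ] H)) :
    Amap (c • W) = (starRingEnd ℂ) c • Amap W := by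
  funext p
  simp only [Amap, Pi.smul_apply]
  rw [map_smulₛₗ]

theorem Bmap_add (w w' : X × X → (H →L[ℂ] H)) : Bmap (w + w') = Bmap w + Bmap w' := by
  funext a b; simp [Bmap, map_add]

theorem Bmap_smul (c : ℂ) (w : X × X → (H →L[ℂ] H)) :
    Bmap (c • w) = (starRingEnd ℂ) c • Bmap w := by
  funext a b
  simp only [Bmap, Pi.smul_apply]
  rw [map_smulₛₗ]

/-- Reorganizing the quadruple sum as a contraction. -/
theorem reorg (u : X → X → (H →L[ℂ] H)) (ξ η : X × X → ℂ) :
    ∑ x : X, ∑ y : X, ∑ a : X, ∑ b : X,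
      ((starRingEnd ℂ) (ξ (x, y)) * η (a, b)) •
        (u a x ∘L ContinuousLinearMap.adjoint (u b y))
    = ∑ p : X × X, η p • ∑ x : X, ∑ y : X,
        (starRingEnd ℂ) (ξ (x, y)) •
          (u p.1 x ∘L ContinuousLinearMap.adjoint (u p.2 y)) := by
  rw [sum4_comm, Fintype.sum_prod_type]
  refine Finset.sum_congr rfl fun a _ => Finset.sum_congr rfl fun b _ => ?_
  show _ = η (a, b) • ∑ x : X, ∑ y : X,
      (starRingEnd ℂ) (ξ (x, y)) • (u a x ∘L ContinuousLinearMap.adjoint (u b y))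
  rw [Finset.smul_sum]
  refine Finset.sum_congr rfl fun x _ => ?_
  rw [Finset.smul_sum]
  refine Finset.sum_congr rfl fun y _ => ?_
  rw [smul_smul, mul_comm]

/-- The conjugate block matrix is the blockwise adjoint-flip of the original one. -/
theorem amap_eq (u : X → X → (H →L[ℂ] H)) (ξ : X × X → ℂ) :
    Amap (fun a b : X => ∑ x : X, ∑ y : X,
        ξ (y, x) • (u a x ∘L ContinuousLinearMap.adjoint (u b y)))
    = fun p : X × X => ∑ x : X, ∑ y : X,
        (starRingEnd ℂ) (ξ (x, y)) •
          (u p.1 x ∘L ContinuousLinearMap.adjoint (u p.2 y)) := by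
  funext p
  show ContinuousLinearMap.adjoint
      (∑ x : X, ∑ y : X, ξ (y, x) •
        (u p.2 x ∘L ContinuousLinearMap.adjoint (u p.1 y))) = _
  have hstep : ContinuousLinearMap.adjoint
      (∑ x : X, ∑ y : X, ξ (y, x) •
        (u p.2 x ∘L ContinuousLinearMap.adjoint (u p.1 y)))
      = ∑ x : X, ∑ y : X, (starRingEnd ℂ) (ξ (y, x)) •
          (u p.1 y ∘L ContinuousLinearMap.adjoint (u p.2 x)) := by
    rw [map_sum]
    refine Finset.sum_congr rfl fun x _ => ?_
    rw [map_sum]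
    refine Finset.sum_congr rfl fun y _ => ?_
    rw [map_smulₛₗ, ContinuousLinearMap.adjoint_comp,
      ContinuousLinearMap.adjoint_adjoint]
  rw [hstep]
  exact Finset.sum_comm

set_option maxHeartbeats 1000000 in
/-- The key one-sided equivalence, applied twice in the main theorem. -/
theorem part (V : Submodule ℂ (X × X → ℂ)) (u : X → X → (H →L[ℂ] H)) (ξ : X × X → ℂ) :
    (∀ η : X × X → ℂ,
        (∀ ζ ∈ V, ∑ p : X × X, (starRingEnd ℂ) (ζ p) * η p = 0) →
        ∑ x : X, ∑ y : X, ∑ a : X, ∑ b : X,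
          ((starRingEnd ℂ) (ξ (x, y)) * η (a, b)) •
            (u a x ∘L ContinuousLinearMap.adjoint (u b y)) = 0) ↔
      (fun a b : X => ∑ x : X, ∑ y : X,
          ξ (y, x) • (u a x ∘L ContinuousLinearMap.adjoint (u b y))) ∈
        Submodule.span ℂ {W : X → X → (H →L[ℂ] H) |
          ∃ ζ ∈ V, ∃ R : H →L[ℂ] H, W = fun a b => ζ (b, a) • R} := by
  have hS₁ : ∀ s ∈ {W : X → X → (H →L[ℂ] H) |
      ∃ ζ ∈ V, ∃ R : H →L[ℂ] H, W = fun a b => ζ (b, a) • R},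
      Amap s ∈ Submodule.span ℂ {w : X × X → (H →L[ℂ] H) |
        ∃ ζ ∈ V, ∃ R : H →L[ℂ] H, w = fun p => (starRingEnd ℂ) (ζ p) • R} := by
    rintro s ⟨ζ, hζ, R, rfl⟩
    refine Submodule.subset_span ⟨ζ, hζ, ContinuousLinearMap.adjoint R, ?_⟩
    funext p
    show ContinuousLinearMap.adjoint (ζ (p.1, p.2) • R) = _
    rw [map_smulₛₗ]
  have hS₂ : ∀ s ∈ {w : X × X → (H →L[ℂ] H) |
      ∃ ζ ∈ V, ∃ R : H →L[ℂ] H, w = fun p => (starRingEnd ℂ) (ζ p) • R},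
      Bmap s ∈ Submodule.span ℂ {W : X → X → (H →L[ℂ] H) |
        ∃ ζ ∈ V, ∃ R : H →L[ℂ] H, W = fun a b => ζ (b, a) • R} := by
    rintro s ⟨ζ, hζ, R, rfl⟩
    refine Submodule.subset_span ⟨ζ, hζ, ContinuousLinearMap.adjoint R, ?_⟩
    funext a b
    show ContinuousLinearMap.adjoint ((starRingEnd ℂ) (ζ (b, a)) • R) = _
    rw [map_smulₛₗ, Complex.conj_conj]
  have hcore := core V (fun p : X × X => ∑ x : X, ∑ y : X,
    (starRingEnd ℂ) (ξ (x, y)) •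
      (u p.1 x ∘L ContinuousLinearMap.adjoint (u p.2 y)))
  constructor
  · intro h
    have hC : (fun p : X × X => ∑ x : X, ∑ y : X,
        (starRingEnd ℂ) (ξ (x, y)) •
          (u p.1 x ∘L ContinuousLinearMap.adjoint (u p.2 y))) ∈
        Submodule.span ℂ {w : X × X → (H →L[ℂ] H) |
          ∃ ζ ∈ V, ∃ R : H →L[ℂ] H, w = fun p => (starRingEnd ℂ) (ζ p) • R} := by
      rw [← hcore]
      intro η hη
      rw [← reorg u ξ η]
      exact h η hη
    have hB := conj_map_span (M := X × X → (H →L[ℂ] H)) (N := X → X → (H →L[ℂ] H))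
      Bmap Bmap_add Bmap_smul _ _ hS₂ _ hC
    have hBC : Bmap (fun p : X × X => ∑ x : X, ∑ y : X,
        (starRingEnd ℂ) (ξ (x, y)) •
          (u p.1 x ∘L ContinuousLinearMap.adjoint (u p.2 y)))
        = fun a b : X => ∑ x : X, ∑ y : X,
            ξ (y, x) • (u a x ∘L ContinuousLinearMap.adjoint (u b y)) := by
      rw [← amap_eq u ξ]
      funext a b
      show ContinuousLinearMap.adjoint (ContinuousLinearMap.adjoint _) = _
      rw [ContinuousLinearMap.adjoint_adjoint]
    rwa [hBC] at hB
  · intro hT η hη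
    have hA := conj_map_span (M := X → X → (H →L[ℂ] H)) (N := X × X → (H →L[ℂ] H))
      Amap Amap_add Amap_smul _ _ hS₁ _ hT
    rw [amap_eq u ξ] at hA
    rw [reorg u ξ η]
    exact hcore.mpr hA η hη

end QGAux

/-- For a bi-unitary `U`, the orthogonality relations between a quantum
graph `𝒰` and the complement of `𝒱` (and vice versa) are equivalent to the bimodule
inclusions `U(S̃_𝒰 ⊗ 1)U^* ⊆ S̃_𝒱 ⊗ B(H)` and `Uᵗ(S̃_𝒱 ⊗ 1)(Uᵗ)^* ⊆ S̃_𝒰 ⊗ B(H)`. -/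
theorem biunitary_orthogonality_iff_bimodule_inclusion
    {X : Type*} [Fintype X] [DecidableEq X]
    {H : Type*} [NormedAddCommGroup H] [InnerProductSpace ℂ H] [CompleteSpace H]
    (𝒰 𝒱 : Submodule ℂ (X × X → ℂ)) (hUg : IsQuantumGraph 𝒰) (hVg : IsQuantumGraph 𝒱)
    (U : X → X → (H →L[ℂ] H)) (hU : IsBiunitary U) :
    ((∀ ξ ∈ 𝒰, ∀ η : X × X → ℂ,
        (∀ ζ ∈ 𝒱, ∑ p : X × X, (starRingEnd ℂ) (ζ p) * η p = 0) →
        ∑ x : X, ∑ y : X, ∑ a : X, ∑ b : X,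
          ((starRingEnd ℂ) (ξ (x, y)) * η (a, b)) •
            (U a x ∘L ContinuousLinearMap.adjoint (U b y)) = 0) ∧
     (∀ ξ' ∈ 𝒱, ∀ η' : X × X → ℂ,
        (∀ ζ ∈ 𝒰, ∑ p : X × X, (starRingEnd ℂ) (ζ p) * η' p = 0) →
        ∑ x : X, ∑ y : X, ∑ a : X, ∑ b : X,
          (η' (x, y) * (starRingEnd ℂ) (ξ' (a, b))) •
            (U a x ∘L ContinuousLinearMap.adjoint (U b y)) = 0)) ↔
    ((∀ ξ ∈ 𝒰,
        (fun a b : X => ∑ x : X, ∑ y : X,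
            ξ (y, x) • (U a x ∘L ContinuousLinearMap.adjoint (U b y))) ∈
          Submodule.span ℂ {W : X → X → (H →L[ℂ] H) |
            ∃ ζ ∈ 𝒱, ∃ R : H →L[ℂ] H, W = fun a b => ζ (b, a) • R}) ∧
     (∀ ξ' ∈ 𝒱,
        (fun a b : X => ∑ x : X, ∑ y : X,
            ξ' (y, x) • (U x a ∘L ContinuousLinearMap.adjoint (U y b))) ∈
          Submodule.span ℂ {W : X → X → (H →L[ℂ] H) |
            ∃ ζ ∈ 𝒰, ∃ R : H →L[ℂ] H, W = fun a b => ζ (b, a) • R})) := by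
  have hswap : ∀ ξ' η' : X × X → ℂ,
      ∑ x : X, ∑ y : X, ∑ a : X, ∑ b : X,
        (η' (x, y) * (starRingEnd ℂ) (ξ' (a, b))) •
          (U a x ∘L ContinuousLinearMap.adjoint (U b y))
      = ∑ x : X, ∑ y : X, ∑ a : X, ∑ b : X,
        ((starRingEnd ℂ) (ξ' (x, y)) * η' (a, b)) •
          (U x a ∘L ContinuousLinearMap.adjoint (U y b)) := by
    intro ξ' η'
    have h1 : ∑ x : X, ∑ y : X, ∑ a : X, ∑ b : X,
        (η' (x, y) * (starRingEnd ℂ) (ξ' (a, b))) •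
          (U a x ∘L ContinuousLinearMap.adjoint (U b y))
        = ∑ x : X, ∑ y : X, ∑ a : X, ∑ b : X,
        ((starRingEnd ℂ) (ξ' (a, b)) * η' (x, y)) •
          (U a x ∘L ContinuousLinearMap.adjoint (U b y)) := by
      refine Finset.sum_congr rfl fun x _ => Finset.sum_congr rfl fun y _ =>
        Finset.sum_congr rfl fun a _ => Finset.sum_congr rfl fun b _ => ?_
      rw [mul_comm]
    rw [h1]
    exact (QGAux.sum4_comm fun x y a b =>
      ((starRingEnd ℂ) (ξ' (x, y)) * η' (a, b)) •
        (U x a ∘L ContinuousLinearMap.adjoint (U y b))).symm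
  apply and_congr
  · exact forall₂_congr fun ξ _ => QGAux.part 𝒱 U ξ
  · refine forall₂_congr fun ξ' _ => ?_
    refine Iff.trans ?_ (QGAux.part 𝒰 (fun a x => U x a) ξ')
    refine forall_congr' fun η' => imp_congr Iff.rfl ?_
    rw [hswap ξ' η']
end
end

section
/- Let X be a finite set and G, H simple graphs with vertex set X; set 𝒰_G := span{e_x⊗e_y : x ∼_G y} ⊆ ℂ^X⊗ℂ^X and 𝒰_H := span{e_a⊗e_b : a ∼_H b}. Then there exists a unitary matrix U ∈ M_X with (U⊗Ū)(𝒰_G) = 𝒰_H if and only if the graphs G and H are isomorphic. Here Ū denotes the entrywise complex conjugate of U and U⊗Ū acts on ℂ^X⊗ℂ^X. -/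
set_option linter.unusedSectionVars false


open scoped ComplexOrder
open scoped Kronecker
open Matrix

noncomputable section

namespace UnitaryGraphIsoAux

variable {X : Type*} [Fintype X] [DecidableEq X]

/-- The submodule of vectors vanishing on non-edges of `G`. -/
def vanish (G : SimpleGraph X) : Submodule ℂ (X × X → ℂ) where
  carrier := {v | ∀ p : X × X, ¬ G.Adj p.1 p.2 → v p = 0}
  add_mem' := by intro a b ha hb p hp; simp [ha p hp, hb p hp]
  zero_mem' := by intro p hp; rfl
  smul_mem' := by intro c v hv p hp; simp [hv p hp]

lemma mem_vanish {G : SimpleGraph X} {v : X × X → ℂ} :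
    v ∈ vanish G ↔ ∀ p : X × X, ¬ G.Adj p.1 p.2 → v p = 0 := Iff.rfl

lemma span_le_vanish (G : SimpleGraph X) :
    Submodule.span ℂ {v : X × X → ℂ |
      ∃ x y, G.Adj x y ∧ v = fun p => if p = (x, y) then 1 else 0} ≤ vanish G := by
  rw [Submodule.span_le]
  rintro v ⟨x, y, hxy, rfl⟩
  intro p hp
  dsimp only
  rw [if_neg]
  rintro rfl
  exact hp hxy

lemma mulVec_kron_ind (U V : Matrix X X ℂ) (x y a b : X) :
    (U ⊗ₖ V).mulVec (fun p : X × X => if p = (x, y) then 1 else 0) (a, b)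
      = U a x * V b y := by
  simp only [Matrix.mulVec, dotProduct, mul_ite, mul_one, mul_zero]
  rw [Finset.sum_ite_eq' Finset.univ ((x, y) : X × X)]
  simp

lemma kron_conj_inv (U : Matrix X X ℂ) (hU : Uᴴ * U = 1) :
    (Uᴴ ⊗ₖ Uᴴ.map (starRingEnd ℂ)) * (U ⊗ₖ U.map (starRingEnd ℂ)) = 1 := by
  rw [← Matrix.mul_kronecker_mul, hU, ← Matrix.map_mul, hU]
  rw [Matrix.map_one _ (map_zero _) (map_one _), Matrix.one_kronecker_one]

lemma exists_good_bijection (U : Matrix X X ℂ) (h1 : Uᴴ * U = 1) (h2 : U * Uᴴ = 1) :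
    ∃ f : X → X, Function.Bijective f ∧ ∀ x, U (f x) x ≠ 0 := by
  classical
  set t : X → Finset X := fun x => Finset.univ.filter (fun a => U a x ≠ 0) with ht
  have hcol : ∀ x, ∑ a, Complex.normSq (U a x) = 1 := by
    intro x
    have h := congrFun (congrFun h1 x) x
    rw [Matrix.mul_apply] at h
    simp only [Matrix.conjTranspose_apply, Matrix.one_apply_eq] at h
    have h' : ∑ a, (Complex.normSq (U a x) : ℂ) = 1 := by
      rw [← h]
      refine Finset.sum_congr rfl fun a _ => ?_
      rw [Complex.normSq_eq_conj_mul_self]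
      rfl
    exact_mod_cast h'
  have hrow : ∀ a, ∑ x, Complex.normSq (U a x) = 1 := by
    intro a
    have h := congrFun (congrFun h2 a) a
    rw [Matrix.mul_apply] at h
    simp only [Matrix.conjTranspose_apply, Matrix.one_apply_eq] at h
    have h' : ∑ x, (Complex.normSq (U a x) : ℂ) = 1 := by
      rw [← h]
      refine Finset.sum_congr rfl fun x _ => ?_
      rw [← Complex.mul_conj]
      rfl
    exact_mod_cast h'
  have hall : ∀ s : Finset X, s.card ≤ (s.biUnion t).card := by
    intro s
    have key : (s.card : ℝ) ≤ ((s.biUnion t).card : ℝ) := by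
      calc (s.card : ℝ) = ∑ _x ∈ s, (1 : ℝ) := by simp
        _ = ∑ x ∈ s, ∑ a, Complex.normSq (U a x) :=
            Finset.sum_congr rfl fun x _ => (hcol x).symm
        _ = ∑ x ∈ s, ∑ a ∈ t x, Complex.normSq (U a x) := by
            refine Finset.sum_congr rfl fun x _ => ?_
            refine (Finset.sum_subset (Finset.subset_univ _) ?_).symm
            intro a _ ha
            simp only [ht, Finset.mem_filter, Finset.mem_univ, true_and, not_not] at ha
            simp [ha]
        _ ≤ ∑ x ∈ s, ∑ a ∈ s.biUnion t, Complex.normSq (U a x) := by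
            refine Finset.sum_le_sum fun x hx => ?_
            exact Finset.sum_le_sum_of_subset_of_nonneg
              (Finset.subset_biUnion_of_mem t hx)
              (fun a _ _ => Complex.normSq_nonneg _)
        _ = ∑ a ∈ s.biUnion t, ∑ x ∈ s, Complex.normSq (U a x) := Finset.sum_comm
        _ ≤ ∑ _a ∈ s.biUnion t, (1 : ℝ) := by
            refine Finset.sum_le_sum fun a _ => ?_
            rw [← hrow a]
            exact Finset.sum_le_sum_of_subset_of_nonneg (Finset.subset_univ s)
              (fun _ _ _ => Complex.normSq_nonneg _)
        _ = ((s.biUnion t).card : ℝ) := by simp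
    exact_mod_cast key
  obtain ⟨f, hinj, hf⟩ := (Finset.all_card_le_biUnion_card_iff_exists_injective t).mp hall
  refine ⟨f, Finite.injective_iff_bijective.mp hinj, fun x => ?_⟩
  have := hf x
  simp only [ht, Finset.mem_filter, Finset.mem_univ, true_and] at this
  exact this

/-- The permutation matrix of an equivalence. -/
def permM (φ : X ≃ X) : Matrix X X ℂ := Matrix.of fun a x => if a = φ x then 1 else 0

lemma permM_unitary (φ : X ≃ X) : (permM φ)ᴴ * permM φ = 1 := by
  ext x y
  simp only [Matrix.mul_apply, Matrix.conjTranspose_apply, permM, Matrix.of_apply,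
    Matrix.one_apply]
  simp only [apply_ite (star : ℂ → ℂ), star_one, star_zero, ite_mul, one_mul, zero_mul]
  rw [Finset.sum_ite_eq' Finset.univ (φ x)]
  simp

lemma perm_image (φ : X ≃ X) (x y : X) :
    Matrix.mulVecLin ((permM φ) ⊗ₖ (permM φ).map (starRingEnd ℂ))
      (fun p : X × X => if p = (x, y) then 1 else 0)
    = fun p : X × X => if p = (φ x, φ y) then 1 else 0 := by
  funext p
  obtain ⟨a, b⟩ := p
  rw [Matrix.mulVecLin_apply, mulVec_kron_ind]
  simp only [permM, Matrix.map_apply, Matrix.of_apply, apply_ite (starRingEnd ℂ),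
    _root_.map_one, _root_.map_zero, Prod.mk.injEq]
  by_cases h1 : a = φ x <;> by_cases h2 : b = φ y <;> simp [h1, h2]

end UnitaryGraphIsoAux

open UnitaryGraphIsoAux

/-- There is a unitary `U ∈ M_X` with `(U ⊗ Ū)(𝒰_G) = 𝒰_H` if and only
if the graphs `G` and `H` are isomorphic. -/
theorem unitary_conjugation_iff_graph_iso
    {X : Type*} [Fintype X] [DecidableEq X] (G H : SimpleGraph X) :
    (∃ U : Matrix X X ℂ, Uᴴ * U = 1 ∧ U * Uᴴ = 1 ∧
      Submodule.map (Matrix.mulVecLin (U ⊗ₖ U.map (starRingEnd ℂ)))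
        (Submodule.span ℂ {v : X × X → ℂ |
          ∃ x y, G.Adj x y ∧ v = fun p => if p = (x, y) then 1 else 0}) =
      Submodule.span ℂ {v : X × X → ℂ |
          ∃ a b, H.Adj a b ∧ v = fun p => if p = (a, b) then 1 else 0}) ↔
    Nonempty (G ≃g H) := by
  constructor
  · rintro ⟨U, hU1, hU2, hmap⟩
    -- Condition 1: images of edge indicators vanish on non-edges of H
    have cond1 : ∀ x y a b, G.Adj x y → U a x ≠ 0 → U b y ≠ 0 → H.Adj a b := by
      intro x y a b hxy hax hby
      by_contra hab
      have hmem : (fun p : X × X => if p = (x, y) then 1 else 0) ∈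
          Submodule.span ℂ {v : X × X → ℂ |
            ∃ x y, G.Adj x y ∧ v = fun p => if p = (x, y) then 1 else 0} :=
        Submodule.subset_span ⟨x, y, hxy, rfl⟩
      have himg := Submodule.mem_map_of_mem
        (f := Matrix.mulVecLin (U ⊗ₖ U.map (starRingEnd ℂ))) hmem
      rw [hmap] at himg
      have hz := span_le_vanish H himg (a, b) hab
      rw [Matrix.mulVecLin_apply, mulVec_kron_ind] at hz
      rcases mul_eq_zero.mp hz with h | h
      · exact hax h
      · exact hby (by simpa using h)
    -- Condition 2: preimages of edge indicators vanish on non-edges of G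
    have cond2 : ∀ a b x y, H.Adj a b → U a x ≠ 0 → U b y ≠ 0 → G.Adj x y := by
      intro a b x y hab hax hby
      by_contra hxy
      have hmem : (fun p : X × X => if p = (a, b) then 1 else 0) ∈
          Submodule.map (Matrix.mulVecLin (U ⊗ₖ U.map (starRingEnd ℂ)))
            (Submodule.span ℂ {v : X × X → ℂ |
              ∃ x y, G.Adj x y ∧ v = fun p => if p = (x, y) then 1 else 0}) := by
        rw [hmap]; exact Submodule.subset_span ⟨a, b, hab, rfl⟩
      obtain ⟨w, hwmem, hw⟩ := hmem
      have hwval : w = (Uᴴ ⊗ₖ Uᴴ.map (starRingEnd ℂ)).mulVec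
          (fun p : X × X => if p = (a, b) then 1 else 0) := by
        rw [← hw, Matrix.mulVecLin_apply, Matrix.mulVec_mulVec, kron_conj_inv U hU1,
          Matrix.one_mulVec]
      have hz := span_le_vanish G hwmem (x, y) hxy
      rw [hwval, mulVec_kron_ind] at hz
      simp only [Matrix.conjTranspose_apply, Matrix.map_apply] at hz
      rcases mul_eq_zero.mp hz with h | h
      · exact hax (by simpa using h)
      · exact hby (by simpa using h)
    obtain ⟨f, hbij, hf⟩ := exists_good_bijection U hU1 hU2
    refine ⟨⟨Equiv.ofBijective f hbij, ?_⟩⟩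
    intro x y
    constructor
    · intro h
      exact cond2 (f x) (f y) x y h (hf x) (hf y)
    · intro h
      exact cond1 x y (f x) (f y) h (hf x) (hf y)
  · rintro ⟨φ⟩
    refine ⟨permM φ.toEquiv, permM_unitary φ.toEquiv,
      mul_eq_one_comm.mp (permM_unitary φ.toEquiv), ?_⟩
    rw [Submodule.map_span]
    congr 1
    ext v
    constructor
    · rintro ⟨w, ⟨x, y, hxy, rfl⟩, rfl⟩
      exact ⟨φ x, φ y, φ.map_adj_iff.mpr hxy, perm_image φ.toEquiv x y⟩
    · rintro ⟨a, b, hab, rfl⟩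
      refine ⟨fun p : X × X => if p = (φ.symm a, φ.symm b) then 1 else 0,
        ⟨φ.symm a, φ.symm b, ?_, rfl⟩, ?_⟩
      · exact φ.symm.map_adj_iff.mpr hab
      · rw [perm_image]
        simp
end
end

section
/- Fix n ∈ ℕ, let A_1 and A_2 be quantum adjacency matrices on (M_n, tr), and let S'_1, S'_2 ⊆ B(L²(M_n)) be the linear spans of the operators L_a∘A_1∘L_b and L_a∘A_2∘L_b respectively (a, b ∈ M_n), where L_a is left multiplication by a. Let K be a Hilbert space, U a unitary operator on L²(M_n)⊗K, and ρ : M_n → M_n⊗B(K) a unital *-homomorphism such that U(L_a⊗I_K)U^* = (π⊗id)(ρ(a)) for every a ∈ M_n, where π⊗id is the representation of M_n⊗B(K) on L²(M_n)⊗K sending c⊗R to L_c⊗R. If U(A_1⊗I_K)U^* = A_2⊗I_K, then U(T⊗I_K)U^* ∈ span{S⊗R : S ∈ S'_2, R ∈ B(K)} for every T ∈ S'_1. -/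
open scoped ComplexOrder
open Matrix

noncomputable section

/-- Matrix units in `M_n`. -/
def eps {n : ℕ} (i j : Fin n) : Matrix (Fin n) (Fin n) ℂ := Matrix.single i j 1

/-- A quantum adjacency matrix on `(M_n, tr)` (where `tr = Tr/n`). -/
def IsQAdj (n : ℕ) (A : Matrix (Fin n) (Fin n) ℂ →ₗ[ℂ] Matrix (Fin n) (Fin n) ℂ) : Prop :=
  (∀ a b : Matrix (Fin n) (Fin n) ℂ,
      Matrix.trace ((A a)ᴴ * b) / (n : ℂ) = Matrix.trace (aᴴ * A b) / (n : ℂ)) ∧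
  (∀ i j : Fin n, (n : ℂ) • ∑ k, A (eps i k) * A (eps k j) = A (eps i j)) ∧
  (∀ x : Matrix (Fin n) (Fin n) ℂ,
      A x = (n : ℂ) • ∑ i, ∑ j, (Matrix.trace (A (eps j i) * x) / (n : ℂ)) • eps i j) ∧
  (∀ i j : Fin n, (n : ℂ) • ∑ k, A (eps i k) * eps k j = 0)

lemma sum_swap6' {β : Type*} [AddCommMonoid β] {ι : Type*} [Fintype ι] {κ : Type*} [Fintype κ]
    (F : ι → ι → κ → κ → κ → κ → β) :
    ∑ m, ∑ m', ∑ p, ∑ q, ∑ r, ∑ s, F m m' p q r s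
      = ∑ p, ∑ q, ∑ r, ∑ s, ∑ m, ∑ m', F m m' p q r s := by
  calc ∑ m, ∑ m', ∑ p, ∑ q, ∑ r, ∑ s, F m m' p q r s
      = ∑ m, ∑ p, ∑ m', ∑ q, ∑ r, ∑ s, F m m' p q r s :=
        Finset.sum_congr rfl fun m _ => Finset.sum_comm
    _ = ∑ p, ∑ m, ∑ m', ∑ q, ∑ r, ∑ s, F m m' p q r s := Finset.sum_comm
    _ = ∑ p, ∑ m, ∑ q, ∑ m', ∑ r, ∑ s, F m m' p q r s :=
        Finset.sum_congr rfl fun p _ => Finset.sum_congr rfl fun m _ => Finset.sum_comm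
    _ = ∑ p, ∑ q, ∑ m, ∑ m', ∑ r, ∑ s, F m m' p q r s :=
        Finset.sum_congr rfl fun p _ => Finset.sum_comm
    _ = ∑ p, ∑ q, ∑ m, ∑ r, ∑ m', ∑ s, F m m' p q r s :=
        Finset.sum_congr rfl fun p _ => Finset.sum_congr rfl fun q _ =>
          Finset.sum_congr rfl fun m _ => Finset.sum_comm
    _ = ∑ p, ∑ q, ∑ r, ∑ m, ∑ m', ∑ s, F m m' p q r s :=
        Finset.sum_congr rfl fun p _ => Finset.sum_congr rfl fun q _ => Finset.sum_comm
    _ = ∑ p, ∑ q, ∑ r, ∑ m, ∑ s, ∑ m', F m m' p q r s :=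
        Finset.sum_congr rfl fun p _ => Finset.sum_congr rfl fun q _ =>
          Finset.sum_congr rfl fun r _ => Finset.sum_congr rfl fun m _ => Finset.sum_comm
    _ = ∑ p, ∑ q, ∑ r, ∑ s, ∑ m, ∑ m', F m m' p q r s :=
        Finset.sum_congr rfl fun p _ => Finset.sum_congr rfl fun q _ =>
          Finset.sum_congr rfl fun r _ => Finset.sum_comm

lemma aux_complete {n : ℕ} (f : Fin (n ^ 2) → Matrix (Fin n) (Fin n) ℂ)
    (hON : ∀ i j, Matrix.trace ((f i)ᴴ * f j) / (n : ℂ) = if i = j then 1 else 0)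
    (x : Matrix (Fin n) (Fin n) ℂ) :
    ∑ m, (Matrix.trace ((f m)ᴴ * x) / (n : ℂ)) • f m = x := by
  rcases Nat.eq_zero_or_pos n with hn | hn
  · subst hn
    have : Subsingleton (Matrix (Fin 0) (Fin 0) ℂ) :=
      ⟨fun a b => by ext i; exact i.elim0⟩
    exact Subsingleton.elim _ _
  · haveI : Nonempty (Fin (n ^ 2)) := ⟨⟨0, by positivity⟩⟩
    have hfj : ∀ j, ∑ m, (Matrix.trace ((f m)ᴴ * f j) / (n : ℂ)) • f m = f j := by
      intro j
      have h : ∀ m : Fin (n ^ 2), (Matrix.trace ((f m)ᴴ * f j) / (n : ℂ)) • f m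
          = if m = j then f m else 0 := by
        intro m; rw [hON]; split <;> simp
      simp_rw [h]
      simp
    have hli : LinearIndependent ℂ f := by
      rw [Fintype.linearIndependent_iff]
      intro g hg j
      have h1 := congrArg (fun y => Matrix.trace ((f j)ᴴ * y) / (n : ℂ)) hg
      simp only [Matrix.mul_sum, Matrix.mul_smul, Matrix.trace_sum, Matrix.trace_smul,
        smul_eq_mul, Matrix.mul_zero, Matrix.trace_zero, zero_div, Finset.sum_div] at h1
      have h2 : ∀ m : Fin (n ^ 2), g m * Matrix.trace ((f j)ᴴ * f m) / (n : ℂ)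
          = if j = m then g m else 0 := by
        intro m; rw [mul_div_assoc, hON]; split <;> simp
      rw [Finset.sum_congr rfl fun m _ => h2 m] at h1
      simpa using h1
    have hcard : Fintype.card (Fin (n ^ 2)) = Module.finrank ℂ (Matrix (Fin n) (Fin n) ℂ) := by
      simp [Module.finrank_matrix]
      ring
    let b := basisOfLinearIndependentOfCardEqFinrank hli hcard
    have hb : ⇑b = f := coe_basisOfLinearIndependentOfCardEqFinrank hli hcard
    let P : Matrix (Fin n) (Fin n) ℂ →ₗ[ℂ] Matrix (Fin n) (Fin n) ℂ :=
      { toFun := fun y => ∑ m, (Matrix.trace ((f m)ᴴ * y) / (n : ℂ)) • f m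
        map_add' := fun y z => by
          simp [Matrix.mul_add, add_div, add_smul, Finset.sum_add_distrib]
        map_smul' := fun c y => by
          simp [Matrix.mul_smul, Finset.smul_sum, mul_div_assoc, mul_smul] }
    have hP : P = LinearMap.id := by
      apply b.ext
      intro m
      have : b m = f m := congrFun hb m
      rw [this]
      simpa [P] using hfj m
    have := LinearMap.ext_iff.mp hP x
    simpa [P] using this

lemma aux_ccomp {n : ℕ} (f : Fin (n ^ 2) → Matrix (Fin n) (Fin n) ℂ)
    (hON : ∀ i j, Matrix.trace ((f i)ᴴ * f j) / (n : ℂ) = if i = j then 1 else 0)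
    (X Y : Matrix (Fin n) (Fin n) ℂ →ₗ[ℂ] Matrix (Fin n) (Fin n) ℂ) (k q : Fin (n ^ 2)) :
    Matrix.trace ((f k)ᴴ * X (Y (f q))) / (n : ℂ)
      = ∑ l, (Matrix.trace ((f k)ᴴ * X (f l)) / (n : ℂ))
          * (Matrix.trace ((f l)ᴴ * Y (f q)) / (n : ℂ)) := by
  have h := aux_complete f hON (Y (f q))
  conv_lhs => rw [← h]
  simp only [map_sum, _root_.map_smul, Matrix.mul_sum, Matrix.mul_smul, Matrix.trace_sum,
    Matrix.trace_smul, smul_eq_mul, Finset.sum_div]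
  exact Finset.sum_congr rfl fun l _ => by ring

lemma aux_phimul {n : ℕ} {K : Type*} [NormedAddCommGroup K] [InnerProductSpace ℂ K]
    [CompleteSpace K]
    (f : Fin (n ^ 2) → Matrix (Fin n) (Fin n) ℂ)
    (hON : ∀ i j, Matrix.trace ((f i)ᴴ * f j) / (n : ℂ) = if i = j then 1 else 0)
    (u : Fin (n ^ 2) → Fin (n ^ 2) → (K →L[ℂ] K))
    (hu1 : ∀ i j, ∑ k, ContinuousLinearMap.adjoint (u k i) * u k j =
        if i = j then (1 : K →L[ℂ] K) else 0)
    (X Y : Matrix (Fin n) (Fin n) ℂ →ₗ[ℂ] Matrix (Fin n) (Fin n) ℂ) (i j : Fin (n ^ 2)) :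
    ∑ k, ∑ l, (Matrix.trace ((f k)ᴴ * X (Y (f l))) / (n : ℂ)) •
        (u i k * ContinuousLinearMap.adjoint (u j l))
      = ∑ m, (∑ k, ∑ l, (Matrix.trace ((f k)ᴴ * X (f l)) / (n : ℂ)) •
            (u i k * ContinuousLinearMap.adjoint (u m l)))
          * (∑ k, ∑ l, (Matrix.trace ((f k)ᴴ * Y (f l)) / (n : ℂ)) •
            (u m k * ContinuousLinearMap.adjoint (u j l))) := by
  symm
  have step2 : ∀ k l p q : Fin (n ^ 2),
      ∑ m, u i k * (ContinuousLinearMap.adjoint (u m l) *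
        (u m p * ContinuousLinearMap.adjoint (u j q)))
      = u i k * ((if l = p then (1 : K →L[ℂ] K) else 0) * ContinuousLinearMap.adjoint (u j q)) := by
    intro k l p q
    rw [← hu1 l p, Finset.sum_mul, Finset.mul_sum]
    exact Finset.sum_congr rfl fun m _ => by rw [mul_assoc]
  calc ∑ m, (∑ k, ∑ l, (Matrix.trace ((f k)ᴴ * X (f l)) / (n : ℂ)) •
            (u i k * ContinuousLinearMap.adjoint (u m l)))
          * (∑ p, ∑ q, (Matrix.trace ((f p)ᴴ * Y (f q)) / (n : ℂ)) •
            (u m p * ContinuousLinearMap.adjoint (u j q)))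
      = ∑ m, ∑ k, ∑ l, ∑ p, ∑ q,
          ((Matrix.trace ((f k)ᴴ * X (f l)) / (n : ℂ)) *
            (Matrix.trace ((f p)ᴴ * Y (f q)) / (n : ℂ))) •
          (u i k * (ContinuousLinearMap.adjoint (u m l) *
            (u m p * ContinuousLinearMap.adjoint (u j q)))) := by
        refine Finset.sum_congr rfl fun m _ => ?_
        rw [Finset.sum_mul]
        refine Finset.sum_congr rfl fun k _ => ?_
        rw [Finset.sum_mul]
        refine Finset.sum_congr rfl fun l _ => ?_
        rw [Finset.mul_sum]
        refine Finset.sum_congr rfl fun p _ => ?_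
        rw [Finset.mul_sum]
        refine Finset.sum_congr rfl fun q _ => ?_
        rw [smul_mul_assoc, mul_smul_comm, smul_smul, mul_assoc]
    _ = ∑ k, ∑ l, ∑ p, ∑ q,
          ((Matrix.trace ((f k)ᴴ * X (f l)) / (n : ℂ)) *
            (Matrix.trace ((f p)ᴴ * Y (f q)) / (n : ℂ))) •
          ∑ m, (u i k * (ContinuousLinearMap.adjoint (u m l) *
            (u m p * ContinuousLinearMap.adjoint (u j q)))) := by
        rw [Finset.sum_comm]
        refine Finset.sum_congr rfl fun k _ => ?_
        rw [Finset.sum_comm]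
        refine Finset.sum_congr rfl fun l _ => ?_
        rw [Finset.sum_comm]
        refine Finset.sum_congr rfl fun p _ => ?_
        rw [Finset.sum_comm]
        refine Finset.sum_congr rfl fun q _ => ?_
        rw [Finset.smul_sum]
    _ = ∑ k, ∑ l, ∑ p, ∑ q,
          ((Matrix.trace ((f k)ᴴ * X (f l)) / (n : ℂ)) *
            (Matrix.trace ((f p)ᴴ * Y (f q)) / (n : ℂ))) •
          (u i k * ((if l = p then (1 : K →L[ℂ] K) else 0) *
            ContinuousLinearMap.adjoint (u j q))) := by
        refine Finset.sum_congr rfl fun k _ => Finset.sum_congr rfl fun l _ =>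
          Finset.sum_congr rfl fun p _ => Finset.sum_congr rfl fun q _ => ?_
        rw [step2]
    _ = ∑ k, ∑ q, (∑ l, (Matrix.trace ((f k)ᴴ * X (f l)) / (n : ℂ)) *
            (Matrix.trace ((f l)ᴴ * Y (f q)) / (n : ℂ))) •
          (u i k * ContinuousLinearMap.adjoint (u j q)) := by
        refine Finset.sum_congr rfl fun k _ => ?_
        have hcol : ∀ l : Fin (n ^ 2), ∑ p, ∑ q,
            ((Matrix.trace ((f k)ᴴ * X (f l)) / (n : ℂ)) *
              (Matrix.trace ((f p)ᴴ * Y (f q)) / (n : ℂ))) •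
            (u i k * ((if l = p then (1 : K →L[ℂ] K) else 0) *
              ContinuousLinearMap.adjoint (u j q)))
            = ∑ q, ((Matrix.trace ((f k)ᴴ * X (f l)) / (n : ℂ)) *
              (Matrix.trace ((f l)ᴴ * Y (f q)) / (n : ℂ))) •
            (u i k * ContinuousLinearMap.adjoint (u j q)) := by
          intro l
          rw [Finset.sum_comm]
          refine Finset.sum_congr rfl fun q _ => ?_
          rw [Finset.sum_eq_single l]
          · rw [if_pos rfl, one_mul]
          · intro p _ hpl
            rw [if_neg (Ne.symm hpl)]
            simp
          · intro h; exact absurd (Finset.mem_univ l) h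
        calc ∑ l, ∑ p, ∑ q,
              ((Matrix.trace ((f k)ᴴ * X (f l)) / (n : ℂ)) *
                (Matrix.trace ((f p)ᴴ * Y (f q)) / (n : ℂ))) •
              (u i k * ((if l = p then (1 : K →L[ℂ] K) else 0) *
                ContinuousLinearMap.adjoint (u j q)))
            = ∑ l, ∑ q, ((Matrix.trace ((f k)ᴴ * X (f l)) / (n : ℂ)) *
                (Matrix.trace ((f l)ᴴ * Y (f q)) / (n : ℂ))) •
              (u i k * ContinuousLinearMap.adjoint (u j q)) :=
              Finset.sum_congr rfl fun l _ => hcol l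
          _ = ∑ q, ∑ l, ((Matrix.trace ((f k)ᴴ * X (f l)) / (n : ℂ)) *
                (Matrix.trace ((f l)ᴴ * Y (f q)) / (n : ℂ))) •
              (u i k * ContinuousLinearMap.adjoint (u j q)) := Finset.sum_comm
          _ = ∑ q, (∑ l, (Matrix.trace ((f k)ᴴ * X (f l)) / (n : ℂ)) *
                (Matrix.trace ((f l)ᴴ * Y (f q)) / (n : ℂ))) •
              (u i k * ContinuousLinearMap.adjoint (u j q)) :=
              Finset.sum_congr rfl fun q _ => (Finset.sum_smul).symm
    _ = ∑ k, ∑ q, (Matrix.trace ((f k)ᴴ * X (Y (f q))) / (n : ℂ)) •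
          (u i k * ContinuousLinearMap.adjoint (u j q)) := by
        refine Finset.sum_congr rfl fun k _ => Finset.sum_congr rfl fun q _ => ?_
        rw [aux_ccomp f hON X Y k q]


set_option maxHeartbeats 2000000 in
/-- Let `A₁, A₂` be quantum adjacency matrices on `(M_n, tr)`, with
`S'_r` the `M_n`-bimodule generated by `A_r` in `B(L²(M_n))`.  Let `U` be a unitary
on `L²(M_n) ⊗ K` (identified with `⊕_{i=1}^{n²} K` via an orthonormal basis `{Λ(f_i)}`,
with block entries `u_{i,j}`) such that `U(L_a ⊗ I)U^* = (π ⊗ id)(ρ(a))` for a unital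
*-homomorphism `ρ : M_n → M_n ⊗ B(K)`.  If `U(A₁ ⊗ I)U^* = A₂ ⊗ I`, then
`U(T ⊗ I)U^* ∈ span{S ⊗ R : S ∈ S'_2, R ∈ B(K)}` for every `T ∈ S'_1`. -/
theorem conjugation_maps_bimodule {n : ℕ}
    (A₁ A₂ : Matrix (Fin n) (Fin n) ℂ →ₗ[ℂ] Matrix (Fin n) (Fin n) ℂ)
    (hA₁ : IsQAdj n A₁) (hA₂ : IsQAdj n A₂)
    (f : Fin (n ^ 2) → Matrix (Fin n) (Fin n) ℂ)
    (hON : ∀ i j, Matrix.trace ((f i)ᴴ * f j) / (n : ℂ) = if i = j then 1 else 0)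
    {K : Type*} [NormedAddCommGroup K] [InnerProductSpace ℂ K] [CompleteSpace K]
    (u : Fin (n ^ 2) → Fin (n ^ 2) → (K →L[ℂ] K))
    -- `U` is unitary:
    (hu1 : ∀ i j, ∑ k, ContinuousLinearMap.adjoint (u k i) ∘L u k j =
        if i = j then (1 : K →L[ℂ] K) else 0)
    (hu2 : ∀ i j, ∑ k, u i k ∘L ContinuousLinearMap.adjoint (u j k) =
        if i = j then (1 : K →L[ℂ] K) else 0)
    -- `ρ` is a unital *-homomorphism:
    (ρ : Matrix (Fin n) (Fin n) ℂ →ₗ[ℂ] Matrix (Fin n) (Fin n) (K →L[ℂ] K))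
    (hmul : ∀ a b, ρ (a * b) = ρ a * ρ b)
    (hstar : ∀ a, ρ (aᴴ) = (ρ a)ᴴ)
    (hone : ρ 1 = 1)
    -- `U (L_a ⊗ I) U^* = (π ⊗ id)(ρ(a))` for every `a ∈ M_n`:
    (hconj : ∀ (a : Matrix (Fin n) (Fin n) ℂ) (i j : Fin (n ^ 2)),
      ∑ k, ∑ l, (Matrix.trace ((f k)ᴴ * (a * f l)) / (n : ℂ)) •
          (u i k ∘L ContinuousLinearMap.adjoint (u j l)) =
        ∑ p, ∑ q, (Matrix.trace ((f i)ᴴ * (eps p q * f j)) / (n : ℂ)) • ρ a p q)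
    -- `U (A₁ ⊗ I) U^* = A₂ ⊗ I`:
    (hint : ∀ i j, ∑ k, ∑ l, (Matrix.trace ((f k)ᴴ * A₁ (f l)) / (n : ℂ)) •
          (u i k ∘L ContinuousLinearMap.adjoint (u j l)) =
        (Matrix.trace ((f i)ᴴ * A₂ (f j)) / (n : ℂ)) • (1 : K →L[ℂ] K)) :
    ∀ T ∈ Submodule.span ℂ
        {T : Matrix (Fin n) (Fin n) ℂ →ₗ[ℂ] Matrix (Fin n) (Fin n) ℂ |
          ∃ a b : Matrix (Fin n) (Fin n) ℂ,
            T = LinearMap.mulLeft ℂ a ∘ₗ A₁ ∘ₗ LinearMap.mulLeft ℂ b},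
      (fun i j : Fin (n ^ 2) => ∑ k, ∑ l,
          (Matrix.trace ((f k)ᴴ * T (f l)) / (n : ℂ)) •
            (u i k ∘L ContinuousLinearMap.adjoint (u j l))) ∈
        Submodule.span ℂ {W : Fin (n ^ 2) → Fin (n ^ 2) → (K →L[ℂ] K) |
          ∃ S ∈ Submodule.span ℂ
            {S : Matrix (Fin n) (Fin n) ℂ →ₗ[ℂ] Matrix (Fin n) (Fin n) ℂ |
              ∃ a b : Matrix (Fin n) (Fin n) ℂ,
                S = LinearMap.mulLeft ℂ a ∘ₗ A₂ ∘ₗ LinearMap.mulLeft ℂ b},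
            ∃ R : K →L[ℂ] K,
              W = fun i j => (Matrix.trace ((f i)ᴴ * S (f j)) / (n : ℂ)) • R} := by
  have hu1' : ∀ i j, ∑ k, ContinuousLinearMap.adjoint (u k i) * u k j =
      if i = j then (1 : K →L[ℂ] K) else 0 := by
    intro i j; simpa only [ContinuousLinearMap.mul_def] using hu1 i j
  have hconj' : ∀ (a : Matrix (Fin n) (Fin n) ℂ) (i j : Fin (n ^ 2)),
      ∑ k, ∑ l, (Matrix.trace ((f k)ᴴ * (a * f l)) / (n : ℂ)) •
          (u i k * ContinuousLinearMap.adjoint (u j l)) =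
        ∑ p, ∑ q, (Matrix.trace ((f i)ᴴ * (eps p q * f j)) / (n : ℂ)) • ρ a p q := by
    intro a i j; simpa only [ContinuousLinearMap.mul_def] using hconj a i j
  have hint' : ∀ i j, ∑ k, ∑ l, (Matrix.trace ((f k)ᴴ * A₁ (f l)) / (n : ℂ)) •
        (u i k * ContinuousLinearMap.adjoint (u j l)) =
      (Matrix.trace ((f i)ᴴ * A₂ (f j)) / (n : ℂ)) • (1 : K →L[ℂ] K) := by
    intro i j; simpa only [ContinuousLinearMap.mul_def] using hint i j
  intro T hT
  induction hT using Submodule.span_induction with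
  | mem T h =>
    obtain ⟨a, b, rfl⟩ := h
    have key : (fun i j : Fin (n ^ 2) => ∑ k, ∑ l,
          (Matrix.trace ((f k)ᴴ *
            ((LinearMap.mulLeft ℂ a ∘ₗ A₁ ∘ₗ LinearMap.mulLeft ℂ b) (f l))) / (n : ℂ)) •
            (u i k ∘L ContinuousLinearMap.adjoint (u j l)))
        = ∑ p, ∑ q, ∑ r, ∑ s, (fun i j : Fin (n ^ 2) =>
            (Matrix.trace ((f i)ᴴ *
              ((LinearMap.mulLeft ℂ (eps p q) ∘ₗ A₂ ∘ₗ LinearMap.mulLeft ℂ (eps r s)) (f j)))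
                / (n : ℂ)) • (ρ a p q ∘L ρ b r s)) := by
      funext i j
      simp only [Finset.sum_apply]
      simp only [← ContinuousLinearMap.mul_def]
      simp only [LinearMap.comp_apply, LinearMap.mulLeft_apply]
      -- left-hand side
      have h1 := aux_phimul f hON u hu1' (LinearMap.mulLeft ℂ a)
        (A₁ ∘ₗ LinearMap.mulLeft ℂ b) i j
      simp only [LinearMap.comp_apply, LinearMap.mulLeft_apply] at h1
      rw [h1]
      have h2 : ∀ m : Fin (n ^ 2), ∑ k, ∑ l,
          (Matrix.trace ((f k)ᴴ * A₁ (b * f l)) / (n : ℂ)) •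
            (u m k * ContinuousLinearMap.adjoint (u j l))
          = ∑ m', (∑ k, ∑ l, (Matrix.trace ((f k)ᴴ * A₁ (f l)) / (n : ℂ)) •
                (u m k * ContinuousLinearMap.adjoint (u m' l)))
              * (∑ k, ∑ l, (Matrix.trace ((f k)ᴴ * (b * f l)) / (n : ℂ)) •
                (u m' k * ContinuousLinearMap.adjoint (u j l))) := by
        intro m
        have := aux_phimul f hON u hu1' A₁ (LinearMap.mulLeft ℂ b) m j
        simpa only [LinearMap.mulLeft_apply] using this
      simp only [h2, hint', hconj']
      -- expand products
      have expandL : ∀ m : Fin (n ^ 2),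
          (∑ p, ∑ q, (Matrix.trace ((f i)ᴴ * (eps p q * f m)) / (n : ℂ)) • ρ a p q) *
            (∑ m', ((Matrix.trace ((f m)ᴴ * A₂ (f m')) / (n : ℂ)) • (1 : K →L[ℂ] K)) *
              (∑ r, ∑ s, (Matrix.trace ((f m')ᴴ * (eps r s * f j)) / (n : ℂ)) • ρ b r s))
          = ∑ m', ∑ p, ∑ q, ∑ r, ∑ s,
              ((Matrix.trace ((f m)ᴴ * A₂ (f m')) / (n : ℂ)) *
                ((Matrix.trace ((f i)ᴴ * (eps p q * f m)) / (n : ℂ)) *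
                  (Matrix.trace ((f m')ᴴ * (eps r s * f j)) / (n : ℂ)))) •
              (ρ a p q * ρ b r s) := by
        intro m
        rw [Finset.mul_sum]
        refine Finset.sum_congr rfl fun m' _ => ?_
        rw [smul_mul_assoc, one_mul, mul_smul_comm]
        have hprod : (∑ p, ∑ q, (Matrix.trace ((f i)ᴴ * (eps p q * f m)) / (n : ℂ)) • ρ a p q) *
            (∑ r, ∑ s, (Matrix.trace ((f m')ᴴ * (eps r s * f j)) / (n : ℂ)) • ρ b r s)
            = ∑ p, ∑ q, ∑ r, ∑ s,
              ((Matrix.trace ((f i)ᴴ * (eps p q * f m)) / (n : ℂ)) *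
                (Matrix.trace ((f m')ᴴ * (eps r s * f j)) / (n : ℂ))) •
              (ρ a p q * ρ b r s) := by
          rw [Finset.sum_mul]
          refine Finset.sum_congr rfl fun p _ => ?_
          rw [Finset.sum_mul]
          refine Finset.sum_congr rfl fun q _ => ?_
          rw [Finset.mul_sum]
          refine Finset.sum_congr rfl fun r _ => ?_
          rw [Finset.mul_sum]
          refine Finset.sum_congr rfl fun s _ => ?_
          rw [smul_mul_assoc, mul_smul_comm, smul_smul]
        rw [hprod, Finset.smul_sum]
        refine Finset.sum_congr rfl fun p _ => ?_
        rw [Finset.smul_sum]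
        refine Finset.sum_congr rfl fun q _ => ?_
        rw [Finset.smul_sum]
        refine Finset.sum_congr rfl fun r _ => ?_
        rw [Finset.smul_sum]
        refine Finset.sum_congr rfl fun s _ => ?_
        rw [smul_smul]
      rw [Finset.sum_congr rfl fun m (_ : m ∈ Finset.univ) => expandL m]
      rw [sum_swap6']
      -- right-hand side coefficients
      refine Finset.sum_congr rfl fun p _ => Finset.sum_congr rfl fun q _ =>
        Finset.sum_congr rfl fun r _ => Finset.sum_congr rfl fun s _ => ?_
      have h3 := aux_ccomp f hON (LinearMap.mulLeft ℂ (eps p q))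
        (A₂ ∘ₗ LinearMap.mulLeft ℂ (eps r s)) i j
      simp only [LinearMap.comp_apply, LinearMap.mulLeft_apply] at h3
      have h4 : ∀ m : Fin (n ^ 2), Matrix.trace ((f m)ᴴ * A₂ (eps r s * f j)) / (n : ℂ)
          = ∑ m', (Matrix.trace ((f m)ᴴ * A₂ (f m')) / (n : ℂ)) *
              (Matrix.trace ((f m')ᴴ * (eps r s * f j)) / (n : ℂ)) := by
        intro m
        have := aux_ccomp f hON A₂ (LinearMap.mulLeft ℂ (eps r s)) m j
        simpa only [LinearMap.mulLeft_apply] using this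
      have h5 : Matrix.trace ((f i)ᴴ * (eps p q * A₂ (eps r s * f j))) / (n : ℂ)
          = ∑ m, ∑ m', (Matrix.trace ((f i)ᴴ * (eps p q * f m)) / (n : ℂ)) *
              ((Matrix.trace ((f m)ᴴ * A₂ (f m')) / (n : ℂ)) *
                (Matrix.trace ((f m')ᴴ * (eps r s * f j)) / (n : ℂ))) := by
        rw [h3]
        refine Finset.sum_congr rfl fun m _ => ?_
        rw [h4 m, Finset.mul_sum]
      rw [h5, Finset.sum_smul]
      refine Finset.sum_congr rfl fun m _ => ?_
      rw [Finset.sum_smul]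
      refine Finset.sum_congr rfl fun m' _ => ?_
      congr 1
      ring
    rw [key]
    refine Submodule.sum_mem _ fun p _ => Submodule.sum_mem _ fun q _ =>
      Submodule.sum_mem _ fun r _ => Submodule.sum_mem _ fun s _ =>
      Submodule.subset_span ?_
    exact ⟨LinearMap.mulLeft ℂ (eps p q) ∘ₗ A₂ ∘ₗ LinearMap.mulLeft ℂ (eps r s),
      Submodule.subset_span ⟨eps p q, eps r s, rfl⟩, ρ a p q ∘L ρ b r s, rfl⟩
  | zero =>
    have h0 : (fun i j : Fin (n ^ 2) => ∑ k, ∑ l,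
        (Matrix.trace ((f k)ᴴ * (0 : Matrix (Fin n) (Fin n) ℂ →ₗ[ℂ] Matrix (Fin n) (Fin n) ℂ)
          (f l)) / (n : ℂ)) • (u i k ∘L ContinuousLinearMap.adjoint (u j l)))
        = 0 := by
      funext i j; simp
    rw [h0]; exact Submodule.zero_mem _
  | add x y hx hy ihx ihy =>
    have hadd : (fun i j : Fin (n ^ 2) => ∑ k, ∑ l,
        (Matrix.trace ((f k)ᴴ * (x + y) (f l)) / (n : ℂ)) •
          (u i k ∘L ContinuousLinearMap.adjoint (u j l)))
        = (fun i j : Fin (n ^ 2) => ∑ k, ∑ l,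
            (Matrix.trace ((f k)ᴴ * x (f l)) / (n : ℂ)) •
              (u i k ∘L ContinuousLinearMap.adjoint (u j l)))
          + (fun i j : Fin (n ^ 2) => ∑ k, ∑ l,
            (Matrix.trace ((f k)ᴴ * y (f l)) / (n : ℂ)) •
              (u i k ∘L ContinuousLinearMap.adjoint (u j l))) := by
      funext i j
      simp only [LinearMap.add_apply, Matrix.mul_add, Matrix.trace_add, add_div, add_smul,
        Finset.sum_add_distrib, Pi.add_apply]
    rw [hadd]; exact Submodule.add_mem _ ihx ihy
  | smul c x hx ih =>
    have hsmul : (fun i j : Fin (n ^ 2) => ∑ k, ∑ l,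
        (Matrix.trace ((f k)ᴴ * (c • x) (f l)) / (n : ℂ)) •
          (u i k ∘L ContinuousLinearMap.adjoint (u j l)))
        = c • (fun i j : Fin (n ^ 2) => ∑ k, ∑ l,
            (Matrix.trace ((f k)ᴴ * x (f l)) / (n : ℂ)) •
              (u i k ∘L ContinuousLinearMap.adjoint (u j l))) := by
      funext i j
      simp only [LinearMap.smul_apply, Matrix.mul_smul, Matrix.trace_smul, smul_eq_mul,
        mul_div_assoc, mul_smul, Finset.smul_sum, Pi.smul_apply]
    rw [hsmul]; exact Submodule.smul_mem _ _ ih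
end
end

section
/- Let X be a finite set, H a Hilbert space, and U = (U_{a,x})_{a,x∈X} a block operator matrix with entries in B(H) such that: U is a unitary operator on the direct sum of X copies of H; ∑_{y∈X} U_{a,y}^* U_{a',y} = δ_{a,a'}·I_H for all a,a' ∈ X; and U_{b,y}^* ( ∑_{a∈X} U_{a,x} U_{a,x'}^* − δ_{x,x'}·I_H ) U_{c,z} = 0 for all x,x',y,z,b,c ∈ X. Then the transposed block matrix U^t := (U_{x,a})_{a,x∈X} (whose (a,x) entry is U_{x,a}) is also unitary; that is, U is a bi-unitary. -/
open scoped ComplexOrder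

noncomputable section

/-- If the block operator matrix `U = (U_{a,x})` is unitary, its
transpose is an isometry, and the compressions `U_{b,y}^* (∑_a U_{a,x}U_{a,x'}^* − δ_{x,x'}) U_{c,z}`
all vanish, then the transpose of `U` is also unitary, i.e. `U` is a bi-unitary. -/
theorem biunitary_of_relations
    {X : Type*} [Fintype X] [DecidableEq X]
    {H : Type*} [NormedAddCommGroup H] [InnerProductSpace ℂ H] [CompleteSpace H]
    (U : X → X → (H →L[ℂ] H))
    (hU1 : ∀ x x' : X, ∑ a : X, ContinuousLinearMap.adjoint (U a x) ∘L U a x' =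
        if x = x' then (1 : H →L[ℂ] H) else 0)
    (hU2 : ∀ a a' : X, ∑ x : X, U a x ∘L ContinuousLinearMap.adjoint (U a' x) =
        if a = a' then (1 : H →L[ℂ] H) else 0)
    (ht : ∀ a a' : X, ∑ y : X, ContinuousLinearMap.adjoint (U a y) ∘L U a' y =
        if a = a' then (1 : H →L[ℂ] H) else 0)
    (hcomp : ∀ x x' y z b c : X,
      ContinuousLinearMap.adjoint (U b y) ∘L
          ((∑ a : X, U a x ∘L ContinuousLinearMap.adjoint (U a x')) -
            (if x = x' then (1 : H →L[ℂ] H) else 0)) ∘L U c z = 0) :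
    (∀ x x' : X, ∑ a : X, ContinuousLinearMap.adjoint (U x a) ∘L U x' a =
        if x = x' then (1 : H →L[ℂ] H) else 0) ∧
    (∀ a a' : X, ∑ x : X, U x a ∘L ContinuousLinearMap.adjoint (U x a') =
        if a = a' then (1 : H →L[ℂ] H) else 0) := by
  refine ⟨ht, ?_⟩
  intro a a'
  obtain ⟨D, hD⟩ : ∃ D : H →L[ℂ] H, D =
      (∑ b : X, U b a ∘L ContinuousLinearMap.adjoint (U b a')) -
        (if a = a' then (1 : H →L[ℂ] H) else 0) := ⟨_, rfl⟩
  have e1 : ∀ w : H, ∑ y : X, U a y (ContinuousLinearMap.adjoint (U a y) w) = w := by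
    intro w
    have h := congrArg (fun T : H →L[ℂ] H => T w) (hU2 a a)
    simpa using h
  have key : ∀ c z (v : H), D (U c z v) = 0 := by
    intro c z v
    have h2 : ∀ y : X, ContinuousLinearMap.adjoint (U a y) (D (U c z v)) = 0 := by
      intro y
      have h := hcomp a a' y z a c
      rw [← hD] at h
      have h' := congrArg (fun T : H →L[ℂ] H => T v) h
      simpa using h'
    calc D (U c z v)
        = ∑ y : X, U a y (ContinuousLinearMap.adjoint (U a y) (D (U c z v))) := (e1 _).symm
      _ = 0 := by simp [h2]
  have hD0 : D = 0 := by
    ext v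
    simp only [ContinuousLinearMap.zero_apply]
    calc D v = D (∑ z : X, U a z (ContinuousLinearMap.adjoint (U a z) v)) := by rw [e1]
      _ = ∑ z : X, D (U a z (ContinuousLinearMap.adjoint (U a z) v)) := map_sum D _ _
      _ = 0 := by simp [key]
  exact sub_eq_zero.mp (hD.symm.trans hD0)
end
end

section
/- Fix n ∈ ℕ and let {f_i}_{i=1}^{n²} ⊆ M_n be an orthonormal basis of M_n with respect to the inner product ⟨a,b⟩ = tr(a^*b). Let H be a Hilbert space and p_{i,j} ∈ B(H) (1 ≤ i,j ≤ n²) be such that the linear map ρ : M_n → M_n⊗B(H) determined by ρ(f_i) = ∑_{j=1}^{n²} f_j⊗p_{j,i} is a unital *-homomorphism satisfying (tr⊗id)(ρ(a)) = tr(a)·I_H for all a ∈ M_n. Then both the block operator matrix P = (p_{i,j})_{i,j=1}^{n²} and its transpose P^t = (p_{j,i})_{i,j=1}^{n²} are unitary operators on the Hilbert space direct sum of n² copies of H; that is, P is a bi-unitary. -/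
open scoped ComplexOrder
open Matrix

noncomputable section

private lemma aux_zero' {H : Type*} [NormedAddCommGroup H] [InnerProductSpace ℂ H]
    [CompleteSpace H] {ι : Type*} [Fintype ι] (x : ι → (H →L[ℂ] H))
    (h : ∑ j, star (x j) * (x j) = 0) : ∀ j, x j = 0 := by
  have key : ∀ v : H, ∑ j, (‖x j v‖ ^ 2 : ℝ) = 0 := by
    intro v
    have h2 : (∑ j, star (x j) * (x j)) v = 0 := by rw [h]; rfl
    rw [ContinuousLinearMap.sum_apply] at h2
    have h3 : (∑ j, (inner ℂ v ((star (x j) * x j) v) : ℂ)) = 0 := by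
      rw [← inner_sum, h2, inner_zero_right]
    have h4 : ∀ j, (inner ℂ v ((star (x j) * x j) v) : ℂ) = (‖x j v‖ ^ 2 : ℝ) := by
      intro j
      rw [ContinuousLinearMap.mul_apply, ContinuousLinearMap.star_eq_adjoint,
        ContinuousLinearMap.adjoint_inner_right, inner_self_eq_norm_sq_to_K]
      norm_cast
    rw [Finset.sum_congr rfl (fun j _ => h4 j)] at h3
    exact_mod_cast h3
  intro j
  ext v
  have hj := (Finset.sum_eq_zero_iff_of_nonneg (fun i _ => sq_nonneg _)).mp (key v) j
    (Finset.mem_univ j)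
  have : ‖x j v‖ = 0 := by nlinarith [norm_nonneg (x j v)]
  simpa using norm_eq_zero.mp this

private lemma aux_matrix' {H : Type*} [NormedAddCommGroup H] [InnerProductSpace ℂ H]
    [CompleteSpace H] {m : ℕ} (Z : Matrix (Fin m) (Fin m) (H →L[ℂ] H))
    (hZ : Zᴴ * Z = Z)
    (hdiag : ∑ i, Z i i = ∑ i, (1 : Matrix (Fin m) (Fin m) (H →L[ℂ] H)) i i) :
    Z = 1 := by
  have hZs : Zᴴ = Z := by
    calc Zᴴ = (Zᴴ * Z)ᴴ := by rw [hZ]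
    _ = Zᴴ * Z := by rw [conjTranspose_mul, conjTranspose_conjTranspose]
    _ = Z := hZ
  set T := 1 - Z with hTdef
  have hZZ : Z * Z = Z := by
    calc Z * Z = Zᴴ * Z := by rw [hZs]
    _ = Z := hZ
  have hT : Tᴴ * T = T := by
    simp only [hTdef, conjTranspose_sub, conjTranspose_one, sub_mul, mul_sub,
      one_mul, mul_one, hZs, hZZ]
    abel
  have hTd : ∑ i, T i i = 0 := by
    simp only [hTdef, Matrix.sub_apply, Finset.sum_sub_distrib, hdiag, sub_self]
  have h0 : ∑ q : Fin m × Fin m, star (T q.1 q.2) * (T q.1 q.2) = 0 := by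
    rw [Fintype.sum_prod_type]
    calc ∑ a, ∑ b, star (T a b) * T a b
        = ∑ b, ∑ a, star (T a b) * T a b := Finset.sum_comm
      _ = ∑ b, (Tᴴ * T) b b := by
          refine Finset.sum_congr rfl fun b _ => ?_
          rw [Matrix.mul_apply]
          refine Finset.sum_congr rfl fun a _ => ?_
          rw [Matrix.conjTranspose_apply]
      _ = ∑ b, T b b := by rw [hT]
      _ = 0 := hTd
  have hT0 : ∀ a b, T a b = 0 := fun a b => aux_zero' _ h0 (a, b)
  have hT1 : T = 0 := by ext a b; rw [hT0 a b]; rfl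
  exact (sub_eq_zero.mp hT1).symm

/-- If `ρ : M_n → M_n ⊗ B(H)`, determined on an orthonormal basis
`{f_i}` of `M_n` by `ρ(f_i) = ∑_j f_j ⊗ p_{j,i}`, is a unital trace-preserving
*-homomorphism, then the block operator matrix `P = (p_{i,j})` is a bi-unitary. -/
theorem rho_star_hom_gives_biunitary
    {n : ℕ} (f : Fin (n ^ 2) → Matrix (Fin n) (Fin n) ℂ)
    (hON : ∀ i j, Matrix.trace ((f i)ᴴ * f j) / (n : ℂ) = if i = j then 1 else 0)
    {H : Type*} [NormedAddCommGroup H] [InnerProductSpace ℂ H] [CompleteSpace H]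
    (p : Fin (n ^ 2) → Fin (n ^ 2) → (H →L[ℂ] H))
    (ρ : Matrix (Fin n) (Fin n) ℂ →ₗ[ℂ] Matrix (Fin n) (Fin n) (H →L[ℂ] H))
    (hval : ∀ i, ρ (f i) = ∑ j, Matrix.of fun r s => f j r s • p j i)
    (hmul : ∀ a b, ρ (a * b) = ρ a * ρ b)
    (hstar : ∀ a, ρ (aᴴ) = (ρ a)ᴴ)
    (hone : ρ 1 = 1)
    (htr : ∀ a, ((n : ℂ))⁻¹ • ∑ i, ρ a i i =
      (Matrix.trace a / (n : ℂ)) • (1 : H →L[ℂ] H)) :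
    (∀ i j, ∑ k, ContinuousLinearMap.adjoint (p k i) ∘L p k j =
        if i = j then (1 : H →L[ℂ] H) else 0) ∧
    (∀ i j, ∑ k, p i k ∘L ContinuousLinearMap.adjoint (p j k) =
        if i = j then (1 : H →L[ℂ] H) else 0) ∧
    (∀ i j, ∑ k, ContinuousLinearMap.adjoint (p i k) ∘L p j k =
        if i = j then (1 : H →L[ℂ] H) else 0) ∧
    (∀ i j, ∑ k, p k i ∘L ContinuousLinearMap.adjoint (p k j) =
        if i = j then (1 : H →L[ℂ] H) else 0) := by
  classical
  -- expansion of the diagonal sum of ρ(a)ᴴ ρ(b) type products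
  have E1 : ∀ i j : Fin (n ^ 2),
      ∑ r, ((∑ k, (Matrix.of fun r s => f k r s • p k i))ᴴ *
        (∑ l, Matrix.of fun r s => f l r s • p l j)) r r
      = ∑ k, ∑ l, (Matrix.trace ((f k)ᴴ * f l)) • (star (p k i) * p l j) := by
    intro i j
    have e1 : ∀ r : Fin n,
        ((∑ k, (Matrix.of fun r s => f k r s • p k i))ᴴ *
          (∑ l, Matrix.of fun r s => f l r s • p l j)) r r
        = ∑ k, ∑ l, ∑ s, (star (f k s r) * f l s r) • (star (p k i) * p l j) := by
      intro r
      rw [Matrix.conjTranspose_sum, Finset.sum_mul_sum]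
      simp only [Matrix.sum_apply, Matrix.mul_apply, Matrix.conjTranspose_apply,
        Matrix.of_apply, star_smul, smul_mul_smul_comm]
    rw [Finset.sum_congr rfl fun r _ => e1 r]
    rw [Finset.sum_comm]
    refine Finset.sum_congr rfl fun k _ => ?_
    rw [Finset.sum_comm]
    refine Finset.sum_congr rfl fun l _ => ?_
    have htrv : Matrix.trace ((f k)ᴴ * f l) = ∑ r, ∑ s, star (f k s r) * f l s r := by
      simp only [Matrix.trace, Matrix.diag, Matrix.mul_apply, Matrix.conjTranspose_apply]
    rw [htrv, Finset.sum_smul]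
    refine Finset.sum_congr rfl fun r _ => ?_
    rw [Finset.sum_smul]
  have E2 : ∀ i j : Fin (n ^ 2),
      ∑ r, ((∑ k, (Matrix.of fun r s => f k r s • p k i)) *
        (∑ l, Matrix.of fun r s => f l r s • p l j)ᴴ) r r
      = ∑ k, ∑ l, (Matrix.trace ((f l)ᴴ * f k)) • (p k i * star (p l j)) := by
    intro i j
    have e1 : ∀ r : Fin n,
        ((∑ k, (Matrix.of fun r s => f k r s • p k i)) *
          (∑ l, Matrix.of fun r s => f l r s • p l j)ᴴ) r r
        = ∑ k, ∑ l, ∑ s, (star (f l r s) * f k r s) • (p k i * star (p l j)) := by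
      intro r
      rw [Matrix.conjTranspose_sum, Finset.sum_mul_sum]
      simp only [Matrix.sum_apply, Matrix.mul_apply, Matrix.conjTranspose_apply,
        Matrix.of_apply, star_smul, smul_mul_smul_comm, mul_comm]
    rw [Finset.sum_congr rfl fun r _ => e1 r]
    rw [Finset.sum_comm]
    refine Finset.sum_congr rfl fun k _ => ?_
    rw [Finset.sum_comm]
    refine Finset.sum_congr rfl fun l _ => ?_
    have htrv : Matrix.trace ((f l)ᴴ * f k) = ∑ r, ∑ s, star (f l r s) * f k r s := by
      simp only [Matrix.trace, Matrix.diag, Matrix.mul_apply, Matrix.conjTranspose_apply]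
      exact Finset.sum_comm
    rw [htrv, Finset.sum_smul]
    refine Finset.sum_congr rfl fun r _ => ?_
    rw [Finset.sum_smul]
  -- the two "trace preservation" relations
  have h1 : ∀ i j, (∑ k, star (p k i) * p k j) = if i = j then (1 : H →L[ℂ] H) else 0 := by
    intro i j
    have key := htr ((f i)ᴴ * f j)
    rw [hmul, hstar, hval i, hval j, E1 i j] at key
    have lhs' : (n : ℂ)⁻¹ • (∑ k, ∑ l, (Matrix.trace ((f k)ᴴ * f l)) • (star (p k i) * p l j))
        = ∑ k, ∑ l, (Matrix.trace ((f k)ᴴ * f l) / (n : ℂ)) • (star (p k i) * p l j) := by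
      rw [Finset.smul_sum]
      refine Finset.sum_congr rfl fun k _ => ?_
      rw [Finset.smul_sum]
      refine Finset.sum_congr rfl fun l _ => ?_
      rw [smul_smul, div_eq_inv_mul]
    rw [lhs'] at key
    simp only [hON, ite_smul, one_smul, zero_smul, Finset.sum_ite_eq,
      Finset.mem_univ, if_true] at key
    exact key
  have h4 : ∀ i j, (∑ k, p k i * star (p k j)) = if i = j then (1 : H →L[ℂ] H) else 0 := by
    intro i j
    have key := htr (f i * (f j)ᴴ)
    rw [hmul, hstar, hval i, hval j, E2 i j] at key
    have lhs' : (n : ℂ)⁻¹ • (∑ k, ∑ l, (Matrix.trace ((f l)ᴴ * f k)) • (p k i * star (p l j)))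
        = ∑ k, ∑ l, (Matrix.trace ((f l)ᴴ * f k) / (n : ℂ)) • (p k i * star (p l j)) := by
      rw [Finset.smul_sum]
      refine Finset.sum_congr rfl fun k _ => ?_
      rw [Finset.smul_sum]
      refine Finset.sum_congr rfl fun l _ => ?_
      rw [smul_smul, div_eq_inv_mul]
    rw [lhs'] at key
    have hRHS : Matrix.trace (f i * (f j)ᴴ) / (n : ℂ) = if i = j then 1 else 0 := by
      rw [Matrix.trace_mul_comm, hON j i]
      simp [eq_comm]
    rw [hRHS] at key
    simp only [hON, ite_smul, one_smul, zero_smul] at key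
    rw [Finset.sum_comm] at key
    simp only [Finset.sum_ite_eq, Finset.mem_univ, if_true] at key
    exact key
  -- package as matrices
  set P : Matrix (Fin (n ^ 2)) (Fin (n ^ 2)) (H →L[ℂ] H) := Matrix.of p with hPdef
  have hP1 : Pᴴ * P = 1 := by
    refine Matrix.ext fun i j => ?_
    rw [Matrix.mul_apply, Matrix.one_apply]
    simpa only [Matrix.conjTranspose_apply, hPdef, Matrix.of_apply] using h1 i j
  have hP4 : Pᵀ * Pᵀᴴ = 1 := by
    refine Matrix.ext fun i j => ?_
    rw [Matrix.mul_apply, Matrix.one_apply]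
    simpa only [Matrix.conjTranspose_apply, Matrix.transpose_apply, hPdef,
      Matrix.of_apply] using h4 i j
  -- P Pᴴ = 1
  have hZ2 : (P * Pᴴ)ᴴ * (P * Pᴴ) = P * Pᴴ := by
    rw [conjTranspose_mul, conjTranspose_conjTranspose]
    calc P * Pᴴ * (P * Pᴴ) = P * (Pᴴ * P) * Pᴴ := by rw [mul_assoc, mul_assoc, mul_assoc]
    _ = P * Pᴴ := by rw [hP1, mul_one]
  have hdiag2 : ∑ i, (P * Pᴴ) i i
      = ∑ i, (1 : Matrix (Fin (n ^ 2)) (Fin (n ^ 2)) (H →L[ℂ] H)) i i := by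
    calc ∑ i, (P * Pᴴ) i i = ∑ i, ∑ k, p i k * star (p i k) := by
          refine Finset.sum_congr rfl fun i _ => ?_
          rw [Matrix.mul_apply]
          refine Finset.sum_congr rfl fun k _ => ?_
          rw [Matrix.conjTranspose_apply]
          rfl
      _ = ∑ k, ∑ i, p i k * star (p i k) := Finset.sum_comm
      _ = ∑ k : Fin (n ^ 2), (1 : H →L[ℂ] H) := by
          refine Finset.sum_congr rfl fun c _ => ?_
          simpa using h4 c c
      _ = ∑ i, (1 : Matrix (Fin (n ^ 2)) (Fin (n ^ 2)) (H →L[ℂ] H)) i i := by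
          simp [Matrix.one_apply]
  have hPP : P * Pᴴ = 1 := aux_matrix' _ hZ2 hdiag2
  -- Pᵀᴴ Pᵀ = 1
  have hZ3 : (Pᵀᴴ * Pᵀ)ᴴ * (Pᵀᴴ * Pᵀ) = Pᵀᴴ * Pᵀ := by
    rw [conjTranspose_mul, conjTranspose_conjTranspose]
    calc Pᵀᴴ * Pᵀ * (Pᵀᴴ * Pᵀ) = Pᵀᴴ * (Pᵀ * Pᵀᴴ) * Pᵀ := by
          rw [mul_assoc, mul_assoc, mul_assoc]
    _ = Pᵀᴴ * Pᵀ := by rw [hP4, mul_one]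
  have hdiag3 : ∑ i, (Pᵀᴴ * Pᵀ) i i
      = ∑ i, (1 : Matrix (Fin (n ^ 2)) (Fin (n ^ 2)) (H →L[ℂ] H)) i i := by
    calc ∑ i, (Pᵀᴴ * Pᵀ) i i = ∑ i, ∑ k, star (p i k) * p i k := by
          refine Finset.sum_congr rfl fun i _ => ?_
          rw [Matrix.mul_apply]
          refine Finset.sum_congr rfl fun k _ => ?_
          rw [Matrix.conjTranspose_apply]
          rfl
      _ = ∑ k, ∑ i, star (p i k) * p i k := Finset.sum_comm
      _ = ∑ k : Fin (n ^ 2), (1 : H →L[ℂ] H) := by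
          refine Finset.sum_congr rfl fun c _ => ?_
          simpa using h1 c c
      _ = ∑ i, (1 : Matrix (Fin (n ^ 2)) (Fin (n ^ 2)) (H →L[ℂ] H)) i i := by
          simp [Matrix.one_apply]
  have hTT : Pᵀᴴ * Pᵀ = 1 := aux_matrix' _ hZ3 hdiag3
  refine ⟨?_, ?_, ?_, ?_⟩
  · intro i j
    have := h1 i j
    simpa only [ContinuousLinearMap.star_eq_adjoint, ContinuousLinearMap.mul_def] using this
  · intro i j
    have := congrFun (congrFun hPP i) j
    rw [Matrix.mul_apply, Matrix.one_apply] at this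
    simp only [Matrix.conjTranspose_apply, hPdef, Matrix.of_apply,
      ContinuousLinearMap.star_eq_adjoint, ContinuousLinearMap.mul_def] at this
    exact this
  · intro i j
    have := congrFun (congrFun hTT i) j
    rw [Matrix.mul_apply, Matrix.one_apply] at this
    simp only [Matrix.conjTranspose_apply, Matrix.transpose_apply, hPdef, Matrix.of_apply,
      ContinuousLinearMap.star_eq_adjoint, ContinuousLinearMap.mul_def] at this
    exact this
  · intro i j
    have := h4 i j
    simpa only [ContinuousLinearMap.star_eq_adjoint, ContinuousLinearMap.mul_def] using this
end
end

section
/- Fix n ∈ ℕ and let A be a quantum adjacency matrix on (M_n, tr). Set e := n·∑_{i,j=1}^n ε_{i,j}⊗A(ε_{j,i}) ∈ M_n⊗M_n. Then: (a) Ψ(A) = e, where A is expanded as A = n·∑_{i,j=1}^n Θ_{Λ(ε_{i,j}),Λ(A(ε_{i,j}))}; (b) e is invariant under the flip 𝔣 of M_n⊗M_n determined by 𝔣(a⊗b) = b⊗a; (c) e^* = e, where the involution on M_n⊗M_n is given by (a⊗b)^* = a^*⊗b^*; and (d) e is idempotent for the multiplication of M_n^{op}⊗M_n, i.e., e⋆e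 = e where ⋆ is the bilinear product determined by (a⊗b)⋆(c⊗d) = (c·a)⊗(b·d). In particular, e is a projection in M_n^{op}⊗M_n. -/
open scoped ComplexOrder
open scoped Kronecker
open Matrix

noncomputable section

/-- The element `e = n ∑_{i,j} ε_{i,j} ⊗ A(ε_{j,i})` of `M_n ⊗ M_n`. -/
def eMat (n : ℕ) (A : Matrix (Fin n) (Fin n) ℂ →ₗ[ℂ] Matrix (Fin n) (Fin n) ℂ) :
    Matrix (Fin n × Fin n) (Fin n × Fin n) ℂ :=
  (n : ℂ) • ∑ i, ∑ j, (eps i j) ⊗ₖ (A (eps j i))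

/-- The linear isomorphism `Ψ : B(L²(M_n)) → M_n ⊗ M_n`, determined by
`Ψ(Θ_{Λ(x),Λ(y)}) = x^* ⊗ y`; in closed form `Ψ(T) = n ∑_{i,j} ε_{i,j}^* ⊗ T(ε_{i,j})`. -/
def Psi (n : ℕ) (T : Matrix (Fin n) (Fin n) ℂ → Matrix (Fin n) (Fin n) ℂ) :
    Matrix (Fin n × Fin n) (Fin n × Fin n) ℂ :=
  (n : ℂ) • ∑ i, ∑ j, (eps i j)ᴴ ⊗ₖ (T (eps i j))

/-- The flip `𝔣` of `M_n ⊗ M_n`, determined by `𝔣(a ⊗ b) = b ⊗ a`. -/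
def flipT {n : ℕ} (M : Matrix (Fin n × Fin n) (Fin n × Fin n) ℂ) :
    Matrix (Fin n × Fin n) (Fin n × Fin n) ℂ :=
  Matrix.of fun p q => M (p.2, p.1) (q.2, q.1)

/-- The multiplication of `M_n^{op} ⊗ M_n`, determined by
`(a ⊗ b) ⋆ (c ⊗ d) = (c·a) ⊗ (b·d)`. -/
def opProd {n : ℕ} (M N : Matrix (Fin n × Fin n) (Fin n × Fin n) ℂ) :
    Matrix (Fin n × Fin n) (Fin n × Fin n) ℂ :=
  Matrix.of fun p q => ∑ r, ∑ s, M (r, p.2) (q.1, s) * N (p.1, s) (r, q.2)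

/- Auxiliary lemmas -/

lemma eps_apply {n : ℕ} (i j a c : Fin n) :
    eps i j a c = if i = a ∧ j = c then 1 else 0 := by
  simp [eps, Matrix.single]

lemma eps_conjT {n : ℕ} (i j : Fin n) : (eps i j)ᴴ = eps j i := by
  ext a c
  simp [eps_apply, Matrix.conjTranspose_apply, eps, Matrix.single, and_comm]

lemma trace_mul_eps {n : ℕ} (M : Matrix (Fin n) (Fin n) ℂ) (c a : Fin n) :
    Matrix.trace (M * eps c a) = M a c := by
  simp [Matrix.trace, Matrix.mul_apply, eps_apply, Matrix.diag, ite_and]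

lemma eMat_apply {n : ℕ} (A : Matrix (Fin n) (Fin n) ℂ →ₗ[ℂ] Matrix (Fin n) (Fin n) ℂ)
    (a b c d : Fin n) :
    eMat n A (a, b) (c, d) = (n : ℂ) * A (eps c a) b d := by
  simp only [eMat, Matrix.smul_apply, Matrix.sum_apply, Matrix.kroneckerMap_apply, smul_eq_mul,
    eps_apply, ite_and, ite_mul, one_mul, zero_mul]
  simp [Finset.sum_ite_eq]

lemma Psi_apply {n : ℕ} (A : Matrix (Fin n) (Fin n) ℂ →ₗ[ℂ] Matrix (Fin n) (Fin n) ℂ)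
    (a b c d : Fin n) :
    Psi n (fun x => A x) (a, b) (c, d) = (n : ℂ) * A (eps c a) b d := by
  simp only [Psi, eps_conjT, Matrix.smul_apply, Matrix.sum_apply, Matrix.kroneckerMap_apply,
    smul_eq_mul, eps_apply, ite_and, ite_mul, one_mul, zero_mul]
  simp [Finset.sum_ite_eq]

lemma Asymm {n : ℕ} {A : Matrix (Fin n) (Fin n) ℂ →ₗ[ℂ] Matrix (Fin n) (Fin n) ℂ}
    (h3 : ∀ x : Matrix (Fin n) (Fin n) ℂ,
      A x = (n : ℂ) • ∑ i, ∑ j, (Matrix.trace (A (eps j i) * x) / (n : ℂ)) • eps i j)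
    (a b c d : Fin n) : A (eps c a) b d = A (eps d b) a c := by
  have hn : (n : ℂ) ≠ 0 := by exact_mod_cast (Fin.pos b).ne'
  have h := congrArg (fun M : Matrix (Fin n) (Fin n) ℂ => M b d) (h3 (eps c a))
  simp only [Matrix.smul_apply, Matrix.sum_apply, smul_eq_mul, trace_mul_eps, eps_apply,
    ite_and, mul_ite, mul_one, mul_zero] at h
  rw [h]
  simp [Finset.sum_ite_eq, Finset.mul_sum]
  field_simp

lemma Aconj {n : ℕ} {A : Matrix (Fin n) (Fin n) ℂ →ₗ[ℂ] Matrix (Fin n) (Fin n) ℂ}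
    (h1 : ∀ a b : Matrix (Fin n) (Fin n) ℂ,
      Matrix.trace ((A a)ᴴ * b) / (n : ℂ) = Matrix.trace (aᴴ * A b) / (n : ℂ))
    (p q r s : Fin n) : star (A (eps p q) r s) = A (eps r s) p q := by
  have hn : (n : ℂ) ≠ 0 := by exact_mod_cast (Fin.pos p).ne'
  have h := h1 (eps p q) (eps r s)
  rw [div_eq_div_iff hn hn] at h
  have h' := mul_right_cancel₀ hn h
  rw [eps_conjT, trace_mul_eps, Matrix.trace_mul_comm, trace_mul_eps,
    Matrix.conjTranspose_apply] at h'
  exact h'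

/-- For a quantum adjacency matrix `A`, the element
`e = n ∑ ε_{i,j} ⊗ A(ε_{j,i})` equals `Ψ(A)`, is flip-invariant, self-adjoint
(here `(a ⊗ b)^* = a^* ⊗ b^*`, i.e. `e^* = eᴴ`), and idempotent in `M_n^{op} ⊗ M_n`;
in particular `e` is a projection in `M_n^{op} ⊗ M_n`. -/
theorem eMat_is_projection {n : ℕ}
    (A : Matrix (Fin n) (Fin n) ℂ →ₗ[ℂ] Matrix (Fin n) (Fin n) ℂ)
    (hA : IsQAdj n A) :
    Psi n (fun x => A x) = eMat n A ∧
    flipT (eMat n A) = eMat n A ∧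
    (eMat n A)ᴴ = eMat n A ∧
    opProd (eMat n A) (eMat n A) = eMat n A := by
  obtain ⟨h1, h2, h3, h4⟩ := hA
  refine ⟨?_, ?_, ?_, ?_⟩
  · ext ⟨a, b⟩ ⟨c, d⟩
    rw [Psi_apply, eMat_apply]
  · ext ⟨a, b⟩ ⟨c, d⟩
    show eMat n A (b, a) (d, c) = eMat n A (a, b) (c, d)
    rw [eMat_apply, eMat_apply, Asymm h3]
  · ext ⟨a, b⟩ ⟨c, d⟩
    show star (eMat n A (c, d) (a, b)) = eMat n A (a, b) (c, d)
    rw [eMat_apply, eMat_apply, star_mul', Aconj h1, Asymm h3]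
    simp
  · ext ⟨a, b⟩ ⟨c, d⟩
    show (∑ r, ∑ s, eMat n A (r, b) (c, s) * eMat n A (a, s) (r, d)) = eMat n A (a, b) (c, d)
    simp only [eMat_apply]
    have key := congrArg (fun M : Matrix (Fin n) (Fin n) ℂ => M b d) (h2 c a)
    simp only [Matrix.smul_apply, Matrix.sum_apply, smul_eq_mul, Matrix.mul_apply] at key
    calc (∑ r, ∑ s, ((n:ℂ) * A (eps c r) b s) * ((n:ℂ) * A (eps r a) s d))
        = (n:ℂ) * ((n:ℂ) * ∑ r, ∑ s, A (eps c r) b s * A (eps r a) s d) := by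
          simp only [Finset.mul_sum]
          refine Finset.sum_congr rfl fun r _ => Finset.sum_congr rfl fun s _ => by ring
      _ = (n:ℂ) * A (eps c a) b d := by rw [key]
end
end

section
/- Fix n ∈ ℕ, an orthonormal basis {Λ(f_i)}_{i=1}^{n²} of L²(M_n), and an algebraic quantum graph G = (M_n, tr, A). Let S' ⊆ B(L²(M_n)) be the linear span of the operators L_a∘A∘L_b (a,b ∈ M_n, L_a = left multiplication by a), let 𝒰_G := (Λ⊗Λ)(Ψ(S')) ⊆ L²(M_n)⊗L²(M_n), and let 𝒰̃_G := (∂⊗1)(𝒰_G), where ∂ is the linear operator on L²(M_n) determined by ∂(Λ(f_i^*)) = Λ(f_i). Then 𝒰̃_G is a quantum pseudo-graph: (a) every element of 𝒰̃_G is orthogonal to ∑_{k=1}^{n²} Λ(f_k)⊗Λ(f_k) (skewness); and (b) (𝔡∘𝔣)(𝒰̃_G) = 𝒰̃_G, where 𝔣 is the flip u⊗v ↦ v⊗u and 𝔡 is the conjugate-linear map sending ∑_{i,j} α_{i,j}·Λ(f_i)⊗Λ(f_j) to ∑_{i,j} conj(α_{i,j})·Λ(f_i)⊗Λ(f_j).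 -/
open scoped ComplexOrder
open scoped Kronecker
open Matrix

noncomputable section

/-- The coefficient of `Λ(f_i) ⊗ Λ(f_j)` in `W`, with respect to the inner product of
`L²(M_n) ⊗ L²(M_n)` (which in the Kronecker coordinates is `(1/n²)·` Frobenius). -/
def coeff {n : ℕ} (f : Fin (n ^ 2) → Matrix (Fin n) (Fin n) ℂ) (i j : Fin (n ^ 2))
    (W : Matrix (Fin n × Fin n) (Fin n × Fin n) ℂ) : ℂ :=
  ((n : ℂ) ^ 2)⁻¹ * ∑ p : Fin n × Fin n, ∑ q : Fin n × Fin n,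
    (starRingEnd ℂ) ((f i ⊗ₖ f j) p q) * W p q

/-- The conjugate-linear map `𝔡`, conjugating the coefficients with respect to the basis
`{Λ(f_i) ⊗ Λ(f_j)}`. -/
def dmap {n : ℕ} (f : Fin (n ^ 2) → Matrix (Fin n) (Fin n) ℂ)
    (W : Matrix (Fin n × Fin n) (Fin n × Fin n) ℂ) :
    Matrix (Fin n × Fin n) (Fin n × Fin n) ℂ :=
  ∑ i, ∑ j, (starRingEnd ℂ) (coeff f i j W) • (f i ⊗ₖ f j)

/-- For `T : L²(M_n) → L²(M_n)`, the operator `T ⊗ 1` on `L²(M_n) ⊗ L²(M_n)`. -/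
def tensorFirst {n : ℕ} (T : Matrix (Fin n) (Fin n) ℂ → Matrix (Fin n) (Fin n) ℂ)
    (W : Matrix (Fin n × Fin n) (Fin n × Fin n) ℂ) :
    Matrix (Fin n × Fin n) (Fin n × Fin n) ℂ :=
  Matrix.of fun p q => T (Matrix.of fun i k => W (i, p.2) (k, q.2)) p.1 q.1

set_option maxRecDepth 4000

section aux
variable {n : ℕ} (f : Fin (n ^ 2) → Matrix (Fin n) (Fin n) ℂ)

lemma trace_hmul (x y : Matrix (Fin n) (Fin n) ℂ) :
    Matrix.trace (xᴴ * y) = ∑ p, ∑ q, (starRingEnd ℂ) (x p q) * y p q := by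
  simp only [Matrix.trace, Matrix.diag_apply, Matrix.mul_apply, Matrix.conjTranspose_apply,
    starRingEnd_apply]
  exact Finset.sum_comm

lemma trace_mul'' (x y : Matrix (Fin n) (Fin n) ℂ) :
    Matrix.trace (x * y) = ∑ p, ∑ q, x p q * y q p := by
  simp only [Matrix.trace, Matrix.diag_apply, Matrix.mul_apply]

lemma complete_f (hn : (n : ℂ) ≠ 0)
    (htr : ∀ i j, Matrix.trace ((f i)ᴴ * f j) = if i = j then (n : ℂ) else 0)
    (p q r s : Fin n) :
    ∑ k, (starRingEnd ℂ) (f k p q) * f k r s = if p = r ∧ q = s then (n : ℂ) else 0 := by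
  have hpow : n ^ 2 = n * n := sq n
  let e : Fin (n ^ 2) ≃ Fin n × Fin n := (finCongr hpow).trans finProdFinEquiv.symm
  let C : Matrix (Fin (n ^ 2)) (Fin (n ^ 2)) ℂ :=
    Matrix.of fun k m => f k (e m).1 (e m).2
  have h1 : C * Cᴴ = (n : ℂ) • 1 := by
    ext i j
    have e1 : (C * Cᴴ) i j
        = ∑ m, f i (e m).1 (e m).2 * (starRingEnd ℂ) (f j (e m).1 (e m).2) := by
      simp only [Matrix.mul_apply, Matrix.conjTranspose_apply, Matrix.of_apply,
        starRingEnd_apply, C]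
    have e2 : (∑ m, f i (e m).1 (e m).2 * (starRingEnd ℂ) (f j (e m).1 (e m).2))
        = ∑ pq : Fin n × Fin n, f i pq.1 pq.2 * (starRingEnd ℂ) (f j pq.1 pq.2) :=
      Equiv.sum_comp e (fun pq => f i pq.1 pq.2 * (starRingEnd ℂ) (f j pq.1 pq.2))
    have e3 : (∑ pq : Fin n × Fin n, f i pq.1 pq.2 * (starRingEnd ℂ) (f j pq.1 pq.2))
        = (starRingEnd ℂ) (Matrix.trace ((f i)ᴴ * f j)) := by
      rw [trace_hmul]
      rw [Fintype.sum_prod_type]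
      simp [mul_comm]
    rw [e1, e2, e3, htr i j]
    simp only [Matrix.smul_apply, Matrix.one_apply, smul_eq_mul]
    split <;> simp
  have h2 : C * ((n : ℂ)⁻¹ • Cᴴ) = 1 := by
    rw [Matrix.mul_smul, h1, smul_smul, inv_mul_cancel₀ hn, one_smul]
  have h3 : ((n : ℂ)⁻¹ • Cᴴ) * C = 1 := mul_eq_one_comm.mp h2
  have h4 : Cᴴ * C = (n : ℂ) • 1 := by
    have := congrArg (fun M => (n : ℂ) • M) h3
    simpa [Matrix.smul_mul, smul_smul, mul_inv_cancel₀ hn] using this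
  have h5 : (Cᴴ * C) (e.symm (p, q)) (e.symm (r, s))
      = ((n : ℂ) • (1 : Matrix (Fin (n ^ 2)) (Fin (n ^ 2)) ℂ)) (e.symm (p, q)) (e.symm (r, s)) := by
    rw [h4]
  have e6 : (Cᴴ * C) (e.symm (p, q)) (e.symm (r, s))
      = ∑ k, (starRingEnd ℂ) (f k p q) * f k r s := by
    simp only [Matrix.mul_apply, Matrix.conjTranspose_apply, Matrix.of_apply,
      Equiv.apply_symm_apply, starRingEnd_apply, C]
  rw [e6] at h5
  rw [h5]
  simp only [Matrix.smul_apply, Matrix.one_apply, EmbeddingLike.apply_eq_iff_eq,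
    Prod.mk.injEq, smul_eq_mul]
  split <;> simp_all

lemma sum_trace_mul
    (hcomp : ∀ p q r s, ∑ k, (starRingEnd ℂ) (f k p q) * f k r s
      = if p = r ∧ q = s then (n : ℂ) else 0)
    (x : Matrix (Fin n) (Fin n) ℂ) (p q : Fin n) :
    ∑ j, Matrix.trace ((f j)ᴴ * x) * f j p q = (n : ℂ) * x p q := by
  calc ∑ j, Matrix.trace ((f j)ᴴ * x) * f j p q
      = ∑ j, ∑ α, ∑ β, x α β * ((starRingEnd ℂ) (f j α β) * f j p q) := by
        refine Finset.sum_congr rfl fun j _ => ?_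
        rw [trace_hmul, Finset.sum_mul]
        refine Finset.sum_congr rfl fun α _ => ?_
        rw [Finset.sum_mul]
        exact Finset.sum_congr rfl fun β _ => by ring
    _ = ∑ α, ∑ β, ∑ j, x α β * ((starRingEnd ℂ) (f j α β) * f j p q) := by
        rw [Finset.sum_comm]
        exact Finset.sum_congr rfl fun α _ => Finset.sum_comm
    _ = ∑ α, ∑ β, x α β * (if α = p ∧ β = q then (n : ℂ) else 0) := by
        refine Finset.sum_congr rfl fun α _ => Finset.sum_congr rfl fun β _ => ?_
        rw [← Finset.mul_sum, hcomp α β p q]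
    _ = (n : ℂ) * x p q := by
        simp [ite_and, Finset.sum_ite_eq', mul_comm]

lemma sum_trace_mulH
    (hcomp : ∀ p q r s, ∑ k, (starRingEnd ℂ) (f k p q) * f k r s
      = if p = r ∧ q = s then (n : ℂ) else 0)
    (x : Matrix (Fin n) (Fin n) ℂ) (p q : Fin n) :
    ∑ k, Matrix.trace (f k * x) * (f k)ᴴ p q = (n : ℂ) * x p q := by
  calc ∑ k, Matrix.trace (f k * x) * (f k)ᴴ p q
      = ∑ k, ∑ α, ∑ β, x β α * ((starRingEnd ℂ) (f k q p) * f k α β) := by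
        refine Finset.sum_congr rfl fun k _ => ?_
        rw [trace_mul'', Finset.sum_mul]
        refine Finset.sum_congr rfl fun α _ => ?_
        rw [Finset.sum_mul]
        refine Finset.sum_congr rfl fun β _ => ?_
        simp only [Matrix.conjTranspose_apply, starRingEnd_apply]
        ring
    _ = ∑ α, ∑ β, ∑ k, x β α * ((starRingEnd ℂ) (f k q p) * f k α β) := by
        rw [Finset.sum_comm]
        exact Finset.sum_congr rfl fun α _ => Finset.sum_comm
    _ = ∑ α, ∑ β, x β α * (if q = α ∧ p = β then (n : ℂ) else 0) := by
        refine Finset.sum_congr rfl fun α _ => Finset.sum_congr rfl fun β _ => ?_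
        rw [← Finset.mul_sum, hcomp q p α β]
    _ = (n : ℂ) * x p q := by
        simp [ite_and, Finset.sum_ite_eq, mul_comm]

lemma exp_f (hn : (n : ℂ) ≠ 0)
    (hcomp : ∀ p q r s, ∑ k, (starRingEnd ℂ) (f k p q) * f k r s
      = if p = r ∧ q = s then (n : ℂ) else 0)
    (x : Matrix (Fin n) (Fin n) ℂ) :
    x = (n : ℂ)⁻¹ • ∑ j, Matrix.trace ((f j)ᴴ * x) • f j := by
  ext p q
  rw [Matrix.smul_apply, Matrix.sum_apply]
  simp only [Matrix.smul_apply, smul_eq_mul]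
  rw [sum_trace_mul f hcomp x p q, ← mul_assoc, inv_mul_cancel₀ hn, one_mul]

lemma exp_fH (hn : (n : ℂ) ≠ 0)
    (hcomp : ∀ p q r s, ∑ k, (starRingEnd ℂ) (f k p q) * f k r s
      = if p = r ∧ q = s then (n : ℂ) else 0)
    (x : Matrix (Fin n) (Fin n) ℂ) :
    x = (n : ℂ)⁻¹ • ∑ k, Matrix.trace (f k * x) • (f k)ᴴ := by
  ext p q
  rw [Matrix.smul_apply, Matrix.sum_apply]
  simp only [Matrix.smul_apply, smul_eq_mul]
  rw [sum_trace_mulH f hcomp x p q, ← mul_assoc, inv_mul_cancel₀ hn, one_mul]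

lemma D_val (hn : (n : ℂ) ≠ 0)
    (hcomp : ∀ p q r s, ∑ k, (starRingEnd ℂ) (f k p q) * f k r s
      = if p = r ∧ q = s then (n : ℂ) else 0)
    (D : Matrix (Fin n) (Fin n) ℂ ≃ₗ[ℂ] Matrix (Fin n) (Fin n) ℂ)
    (hD : ∀ i, D ((f i)ᴴ) = f i)
    (x : Matrix (Fin n) (Fin n) ℂ) :
    D x = (n : ℂ)⁻¹ • ∑ k, Matrix.trace (f k * x) • f k := by
  conv_lhs => rw [exp_fH f hn hcomp x]
  rw [_root_.map_smul, map_sum]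
  simp_rw [_root_.map_smul, hD]

lemma T_expand (T : Matrix (Fin n) (Fin n) ℂ →ₗ[ℂ] Matrix (Fin n) (Fin n) ℂ)
    (x : Matrix (Fin n) (Fin n) ℂ) :
    T x = ∑ i, ∑ j, x i j • T (eps i j) := by
  conv_lhs => rw [Matrix.matrix_eq_sum_single x]
  rw [map_sum]
  refine Finset.sum_congr rfl fun i _ => ?_
  rw [map_sum]
  refine Finset.sum_congr rfl fun j _ => ?_
  have h : Matrix.single i j (x i j) = x i j • eps i j := by
    ext a b
    simp only [eps, Matrix.single, Matrix.smul_apply, Matrix.of_apply, smul_eq_mul]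
    split <;> simp
  rw [h, _root_.map_smul]

lemma Psi_apply_s19 (T : Matrix (Fin n) (Fin n) ℂ → Matrix (Fin n) (Fin n) ℂ)
    (p1 p2 q1 q2 : Fin n) :
    Psi n T (p1, p2) (q1, q2) = (n : ℂ) * (T (eps q1 p1)) p2 q2 := by
  simp only [Psi, Matrix.smul_apply, Matrix.sum_apply, Matrix.kroneckerMap_apply,
    Matrix.conjTranspose_apply, eps, Matrix.single, Matrix.of_apply, smul_eq_mul]
  congr 1
  simp only [apply_ite, star_one, star_zero, ite_mul, one_mul, zero_mul, ite_and]
  rw [Finset.sum_comm]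
  simp [Finset.sum_ite_eq']


lemma phi_eq (hn : (n : ℂ) ≠ 0)
    (hcomp : ∀ p q r s, ∑ k, (starRingEnd ℂ) (f k p q) * f k r s
      = if p = r ∧ q = s then (n : ℂ) else 0)
    (D : Matrix (Fin n) (Fin n) ℂ ≃ₗ[ℂ] Matrix (Fin n) (Fin n) ℂ)
    (hD : ∀ i, D ((f i)ᴴ) = f i)
    (T : Matrix (Fin n) (Fin n) ℂ →ₗ[ℂ] Matrix (Fin n) (Fin n) ℂ) :
    tensorFirst (fun x => D x) (Psi n T) = ∑ j, f j ⊗ₖ (T (f j)) := by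
  ext P Q
  obtain ⟨p1, p2⟩ := P; obtain ⟨q1, q2⟩ := Q
  show D (Matrix.of fun i k => Psi n (⇑T) (i, p2) (k, q2)) p1 q1 = _
  have hM : (Matrix.of fun i k => Psi n (⇑T) (i, p2) (k, q2))
      = Matrix.of fun i k => (n : ℂ) * (T (eps k i)) p2 q2 := by
    ext i k
    simp only [Matrix.of_apply]
    exact Psi_apply_s19 (⇑T) i p2 k q2
  rw [hM, D_val f hn hcomp D hD, Matrix.smul_apply, Matrix.sum_apply]
  simp only [Matrix.smul_apply, smul_eq_mul]
  have htr2 : ∀ j, Matrix.trace (f j * (Matrix.of fun i k => (n : ℂ) * (T (eps k i)) p2 q2))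
      = (n : ℂ) * (T (f j)) p2 q2 := by
    intro j
    rw [trace_mul'']
    conv_rhs => rw [T_expand T (f j)]
    rw [Matrix.sum_apply, Finset.mul_sum]
    refine Finset.sum_congr rfl fun a _ => ?_
    rw [Matrix.sum_apply, Finset.mul_sum]
    refine Finset.sum_congr rfl fun b _ => ?_
    simp only [Matrix.of_apply, Matrix.smul_apply, smul_eq_mul]
    ring
  simp_rw [htr2]
  rw [Matrix.sum_apply, Finset.mul_sum]
  refine Finset.sum_congr rfl fun j _ => ?_
  simp only [Matrix.kroneckerMap_apply]
  field_simp

end aux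

section aux2
variable {n : ℕ} (f : Fin (n ^ 2) → Matrix (Fin n) (Fin n) ℂ)

lemma comm3 {α β γ M : Type*} [Fintype α] [Fintype β] [Fintype γ] [AddCommMonoid M]
    (F : α → β → γ → M) :
    ∑ a, ∑ b, ∑ c, F a b c = ∑ c, ∑ a, ∑ b, F a b c := by
  calc ∑ a, ∑ b, ∑ c, F a b c = ∑ a, ∑ c, ∑ b, F a b c :=
        Finset.sum_congr rfl fun a _ => Finset.sum_comm
    _ = ∑ c, ∑ a, ∑ b, F a b c := Finset.sum_comm

lemma sum_factor {I : Type*} [Fintype I] (A B : I → I → ℂ) :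
    (∑ p : I × I, ∑ q : I × I, A p.1 q.1 * B p.2 q.2)
      = (∑ a, ∑ b, A a b) * (∑ a, ∑ b, B a b) := by
  rw [Fintype.sum_prod_type]
  simp_rw [Fintype.sum_prod_type]
  rw [Finset.sum_mul]
  refine Finset.sum_congr rfl fun p1 _ => ?_
  rw [Finset.sum_mul_sum]
  rw [Finset.sum_comm]
  refine Finset.sum_congr rfl fun q1 _ => Finset.sum_congr rfl fun p2 _ => ?_
  rw [Finset.mul_sum]

lemma coeff_sum_comm {ι : Type*} [Fintype ι]
    (g : ι → Matrix (Fin n × Fin n) (Fin n × Fin n) ℂ) (i j : Fin (n ^ 2)) :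
    coeff f i j (∑ k, g k) = ∑ k, coeff f i j (g k) := by
  unfold coeff
  rw [← Finset.mul_sum]
  congr 1
  simp_rw [Matrix.sum_apply, Finset.mul_sum]
  calc ∑ p : Fin n × Fin n, ∑ q : Fin n × Fin n, ∑ k,
        (starRingEnd ℂ) ((f i ⊗ₖ f j) p q) * g k p q
      = ∑ p : Fin n × Fin n, ∑ k, ∑ q : Fin n × Fin n,
        (starRingEnd ℂ) ((f i ⊗ₖ f j) p q) * g k p q :=
        Finset.sum_congr rfl fun p _ => Finset.sum_comm
    _ = ∑ k, ∑ p : Fin n × Fin n, ∑ q : Fin n × Fin n,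
        (starRingEnd ℂ) ((f i ⊗ₖ f j) p q) * g k p q := Finset.sum_comm

lemma coeff_smul (c : ℂ) (W : Matrix (Fin n × Fin n) (Fin n × Fin n) ℂ) (i j : Fin (n ^ 2)) :
    coeff f i j (c • W) = c * coeff f i j W := by
  unfold coeff
  simp_rw [Matrix.smul_apply, smul_eq_mul, mul_left_comm _ c, ← Finset.mul_sum]
  ring

lemma coeff_kron (hn : (n : ℂ) ≠ 0)
    (htr : ∀ i j, Matrix.trace ((f i)ᴴ * f j) = if i = j then (n : ℂ) else 0)
    (k l i j : Fin (n ^ 2)) :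
    coeff f i j (f k ⊗ₖ f l) = if i = k ∧ j = l then 1 else 0 := by
  unfold coeff
  have h1 : ∀ p q : Fin n × Fin n,
      (starRingEnd ℂ) ((f i ⊗ₖ f j) p q) * (f k ⊗ₖ f l) p q
        = ((starRingEnd ℂ) (f i p.1 q.1) * f k p.1 q.1)
          * ((starRingEnd ℂ) (f j p.2 q.2) * f l p.2 q.2) := by
    intro p q
    simp only [Matrix.kroneckerMap_apply, _root_.map_mul]
    ring
  simp_rw [h1]
  rw [sum_factor (fun a b => (starRingEnd ℂ) (f i a b) * f k a b)
    (fun a b => (starRingEnd ℂ) (f j a b) * f l a b)]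
  rw [← trace_hmul, ← trace_hmul, htr, htr]
  by_cases h2 : i = k <;> by_cases h3 : j = l <;>
    simp [h2, h3, sq, hn, mul_comm]
  field_simp

lemma hcomp_kron
    (hcomp : ∀ p q r s, ∑ k, (starRingEnd ℂ) (f k p q) * f k r s
      = if p = r ∧ q = s then (n : ℂ) else 0)
    (P Q R S : Fin n × Fin n) :
    ∑ kl : Fin (n ^ 2) × Fin (n ^ 2),
        (starRingEnd ℂ) ((f kl.1 ⊗ₖ f kl.2) P Q) * (f kl.1 ⊗ₖ f kl.2) R S
      = if P = R ∧ Q = S then ((n : ℂ)) ^ 2 else 0 := by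
  rw [Fintype.sum_prod_type]
  have h1 : ∀ k l : Fin (n ^ 2), (starRingEnd ℂ) ((f k ⊗ₖ f l) P Q) * (f k ⊗ₖ f l) R S
      = ((starRingEnd ℂ) (f k P.1 Q.1) * f k R.1 S.1)
        * ((starRingEnd ℂ) (f l P.2 Q.2) * f l R.2 S.2) := by
    intro k l
    simp only [Matrix.kroneckerMap_apply, _root_.map_mul]
    ring
  simp_rw [h1]
  rw [← Finset.sum_mul_sum]
  rw [hcomp P.1 Q.1 R.1 S.1, hcomp P.2 Q.2 R.2 S.2]
  simp only [Prod.ext_iff]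
  by_cases h1 : P.1 = R.1 <;> by_cases h2 : Q.1 = S.1 <;>
    by_cases h3 : P.2 = R.2 <;> by_cases h4 : Q.2 = S.2 <;>
    simp [h1, h2, h3, h4, sq]

lemma gen_exp {ι I : Type*} [Fintype ι] [Fintype I] [DecidableEq I]
    (g : ι → Matrix I I ℂ) (c : ℂ)
    (hc : ∀ p q r s, ∑ k, (starRingEnd ℂ) (g k p q) * g k r s = if p = r ∧ q = s then c else 0)
    (V : Matrix I I ℂ) (p q : I) :
    ∑ j, (∑ α, ∑ β, (starRingEnd ℂ) (g j α β) * V α β) * g j p q = c * V p q := by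
  calc ∑ j, (∑ α, ∑ β, (starRingEnd ℂ) (g j α β) * V α β) * g j p q
      = ∑ j, ∑ α, ∑ β, V α β * ((starRingEnd ℂ) (g j α β) * g j p q) := by
        refine Finset.sum_congr rfl fun j _ => ?_
        rw [Finset.sum_mul]
        refine Finset.sum_congr rfl fun α _ => ?_
        rw [Finset.sum_mul]
        exact Finset.sum_congr rfl fun β _ => by ring
    _ = ∑ α, ∑ β, ∑ j, V α β * ((starRingEnd ℂ) (g j α β) * g j p q) := by
        rw [Finset.sum_comm]
        exact Finset.sum_congr rfl fun α _ => Finset.sum_comm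
    _ = ∑ α, ∑ β, V α β * (if α = p ∧ β = q then c else 0) := by
        refine Finset.sum_congr rfl fun α _ => Finset.sum_congr rfl fun β _ => ?_
        rw [← Finset.mul_sum, hc α β p q]
    _ = c * V p q := by
        simp [ite_and, Finset.sum_ite_eq', mul_comm]

lemma exp2 (hn : (n : ℂ) ≠ 0)
    (hcomp : ∀ p q r s, ∑ k, (starRingEnd ℂ) (f k p q) * f k r s
      = if p = r ∧ q = s then (n : ℂ) else 0)
    (V : Matrix (Fin n × Fin n) (Fin n × Fin n) ℂ) :
    ∑ i, ∑ j, coeff f i j V • (f i ⊗ₖ f j) = V := by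
  have hn2 : ((n : ℂ)) ^ 2 ≠ 0 := pow_ne_zero _ hn
  ext P Q
  rw [Matrix.sum_apply]
  simp_rw [Matrix.sum_apply, Matrix.smul_apply, smul_eq_mul]
  have pr : (∑ kl : Fin (n ^ 2) × Fin (n ^ 2), coeff f kl.1 kl.2 V * (f kl.1 ⊗ₖ f kl.2) P Q)
      = ∑ x : Fin (n ^ 2), ∑ y : Fin (n ^ 2), coeff f x y V * (f x ⊗ₖ f y) P Q :=
    Fintype.sum_prod_type _
  rw [← pr]
  have key := gen_exp (fun kl : Fin (n ^ 2) × Fin (n ^ 2) => f kl.1 ⊗ₖ f kl.2) ((n : ℂ) ^ 2)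
    (hcomp_kron f hcomp) V P Q
  calc ∑ kl : Fin (n ^ 2) × Fin (n ^ 2), coeff f kl.1 kl.2 V * (f kl.1 ⊗ₖ f kl.2) P Q
      = ((n : ℂ) ^ 2)⁻¹ * ∑ kl : Fin (n ^ 2) × Fin (n ^ 2),
          (∑ α, ∑ β, (starRingEnd ℂ) ((f kl.1 ⊗ₖ f kl.2) α β) * V α β)
            * (f kl.1 ⊗ₖ f kl.2) P Q := by
        rw [Finset.mul_sum]
        refine Finset.sum_congr rfl fun kl _ => ?_
        unfold coeff
        ring
    _ = ((n : ℂ) ^ 2)⁻¹ * ((n : ℂ) ^ 2 * V P Q) := by rw [key]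
    _ = V P Q := by field_simp

lemma coeff_flipT (i j : Fin (n ^ 2)) (V : Matrix (Fin n × Fin n) (Fin n × Fin n) ℂ) :
    coeff f i j (flipT V) = coeff f j i V := by
  unfold coeff flipT
  congr 1
  refine Fintype.sum_equiv (Equiv.prodComm (Fin n) (Fin n)) _ _ fun p => ?_
  obtain ⟨p1, p2⟩ := p
  refine Fintype.sum_equiv (Equiv.prodComm (Fin n) (Fin n)) _ _ fun q => ?_
  obtain ⟨q1, q2⟩ := q
  simp only [Matrix.kroneckerMap_apply, Matrix.of_apply, Equiv.prodComm_apply,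
    Prod.swap_prod_mk, _root_.map_mul]
  ring

lemma coeff_dsum (hn : (n : ℂ) ≠ 0)
    (htr : ∀ i j, Matrix.trace ((f i)ᴴ * f j) = if i = j then (n : ℂ) else 0)
    (d : Fin (n ^ 2) → Fin (n ^ 2) → ℂ) (i j : Fin (n ^ 2)) :
    coeff f i j (∑ k, ∑ l, d k l • (f k ⊗ₖ f l)) = d i j := by
  rw [coeff_sum_comm]
  simp_rw [coeff_sum_comm, coeff_smul, coeff_kron f hn htr]
  simp [ite_and, Finset.sum_ite_eq', mul_comm]

lemma kron_sum_exp (hn : (n : ℂ) ≠ 0)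
    (hcomp : ∀ p q r s, ∑ k, (starRingEnd ℂ) (f k p q) * f k r s
      = if p = r ∧ q = s then (n : ℂ) else 0)
    (g : Fin (n ^ 2) → Matrix (Fin n) (Fin n) ℂ) :
    ∑ m, f m ⊗ₖ g m
      = ∑ k, ∑ l, ((n : ℂ)⁻¹ * Matrix.trace ((f l)ᴴ * g k)) • (f k ⊗ₖ f l) := by
  refine Finset.sum_congr rfl fun m _ => ?_
  ext P Q
  rw [Matrix.sum_apply]
  simp only [Matrix.smul_apply, Matrix.kroneckerMap_apply, smul_eq_mul]
  have key := sum_trace_mul f hcomp (g m) P.2 Q.2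
  calc f m P.1 Q.1 * g m P.2 Q.2
      = (n : ℂ)⁻¹ * ((n : ℂ) * g m P.2 Q.2) * f m P.1 Q.1 := by
        field_simp
    _ = (n : ℂ)⁻¹ * (∑ l, Matrix.trace ((f l)ᴴ * g m) * f l P.2 Q.2) * f m P.1 Q.1 := by
        rw [key]
    _ = ∑ l, ((n : ℂ)⁻¹ * Matrix.trace ((f l)ᴴ * g m)) * (f m P.1 Q.1 * f l P.2 Q.2) := by
        rw [Finset.mul_sum, Finset.sum_mul]
        exact Finset.sum_congr rfl fun l _ => by ring

lemma dmap_flip_sum (hn : (n : ℂ) ≠ 0)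
    (htr : ∀ i j, Matrix.trace ((f i)ᴴ * f j) = if i = j then (n : ℂ) else 0)
    (hcomp : ∀ p q r s, ∑ k, (starRingEnd ℂ) (f k p q) * f k r s
      = if p = r ∧ q = s then (n : ℂ) else 0)
    (g : Fin (n ^ 2) → Matrix (Fin n) (Fin n) ℂ) :
    dmap f (flipT (∑ m, f m ⊗ₖ g m))
      = ∑ i, ∑ j, (starRingEnd ℂ) ((n : ℂ)⁻¹ * Matrix.trace ((f i)ᴴ * g j)) • (f i ⊗ₖ f j) := by
  unfold dmap
  refine Finset.sum_congr rfl fun i _ => Finset.sum_congr rfl fun j _ => ?_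
  congr 2
  rw [coeff_flipT f, kron_sum_exp f hn hcomp g, coeff_dsum f hn htr]

lemma dmap_flip_invol (hn : (n : ℂ) ≠ 0)
    (htr : ∀ i j, Matrix.trace ((f i)ᴴ * f j) = if i = j then (n : ℂ) else 0)
    (hcomp : ∀ p q r s, ∑ k, (starRingEnd ℂ) (f k p q) * f k r s
      = if p = r ∧ q = s then (n : ℂ) else 0)
    (V : Matrix (Fin n × Fin n) (Fin n × Fin n) ℂ) :
    dmap f (flipT (dmap f (flipT V))) = V := by
  have h1 : ∀ W : Matrix (Fin n × Fin n) (Fin n × Fin n) ℂ, ∀ i j,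
      coeff f i j (dmap f W) = (starRingEnd ℂ) (coeff f i j W) := by
    intro W i j
    unfold dmap
    rw [coeff_dsum f hn htr]
  conv_lhs => rw [dmap]
  have h2 : ∀ i j : Fin (n ^ 2), coeff f i j (flipT (dmap f (flipT V)))
      = (starRingEnd ℂ) (coeff f i j V) := by
    intro i j
    rw [coeff_flipT f, h1, coeff_flipT f]
  simp_rw [h2, Complex.conj_conj]
  exact exp2 f hn hcomp V

lemma sum_diag
    (hcomp : ∀ p q r s, ∑ k, (starRingEnd ℂ) (f k p q) * f k r s
      = if p = r ∧ q = s then (n : ℂ) else 0)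
    (T : Matrix (Fin n) (Fin n) ℂ →ₗ[ℂ] Matrix (Fin n) (Fin n) ℂ) :
    ∑ k, Matrix.trace ((f k)ᴴ * T (f k)) = (n : ℂ) * ∑ a, ∑ b, (T (eps a b)) a b := by
  calc ∑ k, Matrix.trace ((f k)ᴴ * T (f k))
      = ∑ k, ∑ p, ∑ q, ∑ a, ∑ b,
          (T (eps a b)) p q * ((starRingEnd ℂ) (f k p q) * f k a b) := by
        refine Finset.sum_congr rfl fun k _ => ?_
        rw [trace_hmul]
        refine Finset.sum_congr rfl fun p _ => Finset.sum_congr rfl fun q _ => ?_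
        conv_lhs => rw [T_expand T (f k)]
        rw [Matrix.sum_apply, Finset.mul_sum]
        refine Finset.sum_congr rfl fun a _ => ?_
        rw [Matrix.sum_apply, Finset.mul_sum]
        refine Finset.sum_congr rfl fun b _ => ?_
        simp only [Matrix.smul_apply, smul_eq_mul]
        ring
    _ = ∑ p, ∑ q, ∑ a, ∑ b, ∑ k,
          (T (eps a b)) p q * ((starRingEnd ℂ) (f k p q) * f k a b) := by
        rw [Finset.sum_comm]
        refine Finset.sum_congr rfl fun p _ => ?_
        rw [Finset.sum_comm]
        refine Finset.sum_congr rfl fun q _ => ?_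
        rw [Finset.sum_comm]
        refine Finset.sum_congr rfl fun a _ => ?_
        rw [Finset.sum_comm]
    _ = ∑ p, ∑ q, ∑ a, ∑ b,
          (T (eps a b)) p q * (if p = a ∧ q = b then (n : ℂ) else 0) := by
        refine Finset.sum_congr rfl fun p _ => Finset.sum_congr rfl fun q _ =>
          Finset.sum_congr rfl fun a _ => Finset.sum_congr rfl fun b _ => ?_
        rw [← Finset.mul_sum, hcomp p q a b]
    _ = (n : ℂ) * ∑ a, ∑ b, (T (eps a b)) a b := by
        rw [Finset.mul_sum]
        refine Finset.sum_congr rfl fun p _ => ?_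
        rw [Finset.mul_sum]
        refine Finset.sum_congr rfl fun q _ => ?_
        simp [ite_and, Finset.sum_ite_eq, mul_comm]

lemma ell_eq
    (htr : ∀ i j, Matrix.trace ((f i)ᴴ * f j) = if i = j then (n : ℂ) else 0)
    (T : Matrix (Fin n) (Fin n) ℂ →ₗ[ℂ] Matrix (Fin n) (Fin n) ℂ) :
    ∑ p : Fin n × Fin n, ∑ q : Fin n × Fin n,
        (starRingEnd ℂ) ((∑ k, f k ⊗ₖ f k) p q) * ((∑ j, f j ⊗ₖ (T (f j))) p q)
      = (n : ℂ) * ∑ k, Matrix.trace ((f k)ᴴ * T (f k)) := by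
  calc ∑ p : Fin n × Fin n, ∑ q : Fin n × Fin n,
        (starRingEnd ℂ) ((∑ k, f k ⊗ₖ f k) p q) * ((∑ j, f j ⊗ₖ (T (f j))) p q)
      = ∑ p : Fin n × Fin n, ∑ q : Fin n × Fin n, ∑ k, ∑ j,
          ((starRingEnd ℂ) (f k p.1 q.1) * f j p.1 q.1)
            * ((starRingEnd ℂ) (f k p.2 q.2) * (T (f j)) p.2 q.2) := by
        refine Finset.sum_congr rfl fun p _ => Finset.sum_congr rfl fun q _ => ?_
        rw [Matrix.sum_apply, Matrix.sum_apply, map_sum, Finset.sum_mul_sum]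
        refine Finset.sum_congr rfl fun k _ => Finset.sum_congr rfl fun j _ => ?_
        simp only [Matrix.kroneckerMap_apply, _root_.map_mul]
        ring
    _ = ∑ k, ∑ j, ∑ p : Fin n × Fin n, ∑ q : Fin n × Fin n,
          ((starRingEnd ℂ) (f k p.1 q.1) * f j p.1 q.1)
            * ((starRingEnd ℂ) (f k p.2 q.2) * (T (f j)) p.2 q.2) := by
        rw [comm3]
        refine Finset.sum_congr rfl fun k _ => ?_
        rw [comm3]
    _ = ∑ k, ∑ j, (if k = j then (n : ℂ) else 0) * Matrix.trace ((f k)ᴴ * T (f j)) := by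
        refine Finset.sum_congr rfl fun k _ => Finset.sum_congr rfl fun j _ => ?_
        rw [sum_factor (fun a b => (starRingEnd ℂ) (f k a b) * f j a b)
          (fun a b => (starRingEnd ℂ) (f k a b) * (T (f j)) a b)]
        rw [← trace_hmul, ← trace_hmul, htr]
    _ = (n : ℂ) * ∑ k, Matrix.trace ((f k)ᴴ * T (f k)) := by
        rw [Finset.mul_sum]
        refine Finset.sum_congr rfl fun k _ => ?_
        simp [ite_mul, Finset.sum_ite_eq']

lemma mul_eps (q' : Matrix (Fin n) (Fin n) ℂ) (u v : Fin n) :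
    q' * eps u v = ∑ r, q' r u • eps r v := by
  ext a b
  rw [Matrix.mul_apply, Matrix.sum_apply]
  simp only [eps, Matrix.single, Matrix.smul_apply, Matrix.of_apply, smul_eq_mul,
    mul_ite, mul_one, mul_zero, ite_and]
  rw [Finset.sum_ite_eq Finset.univ u fun m => if v = b then q' a m else 0,
    Finset.sum_ite_eq' Finset.univ a fun r => if v = b then q' r u else 0]
  simp

lemma gen_L (A : Matrix (Fin n) (Fin n) ℂ →ₗ[ℂ] Matrix (Fin n) (Fin n) ℂ)
    (hA3 : ∀ i p : Fin n, ∑ k, (A (eps i k)) p k = 0) (a b : Matrix (Fin n) (Fin n) ℂ) :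
    ∑ u, ∑ v, ((LinearMap.mulLeft ℂ a ∘ₗ A ∘ₗ LinearMap.mulLeft ℂ b) (eps u v)) u v = 0 := by
  have h0 : ∀ u v : Fin n, ((LinearMap.mulLeft ℂ a ∘ₗ A ∘ₗ LinearMap.mulLeft ℂ b) (eps u v)) u v
      = ∑ s, ∑ r, (a u s * b r u) * (A (eps r v)) s v := by
    intro u v
    simp only [LinearMap.comp_apply, LinearMap.mulLeft_apply]
    rw [mul_eps, map_sum, Matrix.mul_apply]
    refine Finset.sum_congr rfl fun s _ => ?_
    rw [Matrix.sum_apply, Finset.mul_sum]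
    refine Finset.sum_congr rfl fun r _ => ?_
    simp only [_root_.map_smul, Matrix.smul_apply, smul_eq_mul]
    ring
  simp_rw [h0]
  refine Finset.sum_eq_zero fun u _ => ?_
  rw [(comm3 fun s r v => (a u s * b r u) * (A (eps r v)) s v).symm]
  refine Finset.sum_eq_zero fun s _ => Finset.sum_eq_zero fun r _ => ?_
  rw [← Finset.mul_sum, hA3 r s, mul_zero]

lemma gen_star (hn : (n : ℂ) ≠ 0) (A : Matrix (Fin n) (Fin n) ℂ →ₗ[ℂ] Matrix (Fin n) (Fin n) ℂ)
    (hA1 : ∀ a b : Matrix (Fin n) (Fin n) ℂ,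
      Matrix.trace ((A a)ᴴ * b) / (n : ℂ) = Matrix.trace (aᴴ * A b) / (n : ℂ))
    (p q x y : Matrix (Fin n) (Fin n) ℂ) :
    (starRingEnd ℂ) ((n : ℂ)⁻¹ * Matrix.trace (xᴴ * (p * A (q * y))))
      = (n : ℂ)⁻¹ * Matrix.trace (yᴴ * (qᴴ * A (pᴴ * x))) := by
  rw [_root_.map_mul]
  congr 1
  · simp
  calc (starRingEnd ℂ) (Matrix.trace (xᴴ * (p * A (q * y))))
      = Matrix.trace ((xᴴ * (p * A (q * y)))ᴴ) := by
        rw [Matrix.trace_conjTranspose, starRingEnd_apply]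
    _ = Matrix.trace ((A (q * y))ᴴ * (pᴴ * x)) := by
        rw [Matrix.conjTranspose_mul, Matrix.conjTranspose_mul,
          Matrix.conjTranspose_conjTranspose, Matrix.mul_assoc]
    _ = Matrix.trace ((q * y)ᴴ * A (pᴴ * x)) := by
        have h := hA1 (q * y) (pᴴ * x)
        rw [div_eq_div_iff hn hn] at h
        exact mul_right_cancel₀ hn h
    _ = Matrix.trace (yᴴ * (qᴴ * A (pᴴ * x))) := by
        rw [Matrix.conjTranspose_mul, Matrix.mul_assoc]

lemma coeff_add (U V : Matrix (Fin n × Fin n) (Fin n × Fin n) ℂ) (i j : Fin (n ^ 2)) :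
    coeff f i j (U + V) = coeff f i j U + coeff f i j V := by
  unfold coeff
  rw [← mul_add, ← Finset.sum_add_distrib]
  congr 1
  refine Finset.sum_congr rfl fun p _ => ?_
  rw [← Finset.sum_add_distrib]
  refine Finset.sum_congr rfl fun q _ => ?_
  simp [Matrix.add_apply, mul_add]

lemma flipT_add (U V : Matrix (Fin n × Fin n) (Fin n × Fin n) ℂ) :
    flipT (U + V) = flipT U + flipT V := by
  ext P Q; simp [flipT, Matrix.add_apply]

lemma flipT_smul (c : ℂ) (U : Matrix (Fin n × Fin n) (Fin n × Fin n) ℂ) :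
    flipT (c • U) = c • flipT U := by
  ext P Q; simp [flipT, Matrix.smul_apply]

lemma dmap_add (U V : Matrix (Fin n × Fin n) (Fin n × Fin n) ℂ) :
    dmap f (U + V) = dmap f U + dmap f V := by
  unfold dmap
  rw [← Finset.sum_add_distrib]
  refine Finset.sum_congr rfl fun i _ => ?_
  rw [← Finset.sum_add_distrib]
  refine Finset.sum_congr rfl fun j _ => ?_
  rw [coeff_add, map_add, add_smul]

lemma dmap_smul (c : ℂ) (U : Matrix (Fin n × Fin n) (Fin n × Fin n) ℂ) :
    dmap f (c • U) = (starRingEnd ℂ) c • dmap f U := by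
  unfold dmap
  rw [Finset.smul_sum]
  refine Finset.sum_congr rfl fun i _ => ?_
  rw [Finset.smul_sum]
  refine Finset.sum_congr rfl fun j _ => ?_
  rw [coeff_smul, _root_.map_mul, mul_smul]

end aux2

/-- For an algebraic quantum graph `G = (M_n, tr, A)`, the subspace
`𝒰̃_G = (∂ ⊗ 1)((Λ⊗Λ)(Ψ(S')))` is a quantum pseudo-graph: it is skew and invariant
under `𝔡 ∘ 𝔣`. -/
theorem tildeU_is_quantum_pseudo_graph {n : ℕ}
    (f : Fin (n ^ 2) → Matrix (Fin n) (Fin n) ℂ)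
    (hON : ∀ i j, Matrix.trace ((f i)ᴴ * f j) / (n : ℂ) = if i = j then 1 else 0)
    (A : Matrix (Fin n) (Fin n) ℂ →ₗ[ℂ] Matrix (Fin n) (Fin n) ℂ)
    (hA : IsQAdj n A)
    (D : Matrix (Fin n) (Fin n) ℂ ≃ₗ[ℂ] Matrix (Fin n) (Fin n) ℂ)
    (hD : ∀ i, D ((f i)ᴴ) = f i)
    (Ut : Set (Matrix (Fin n × Fin n) (Fin n × Fin n) ℂ))
    (hUt : Ut = tensorFirst (fun x => D x) ''
      ((fun T : Matrix (Fin n) (Fin n) ℂ →ₗ[ℂ] Matrix (Fin n) (Fin n) ℂ => Psi n T) ''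
        ((Submodule.span ℂ
          {T : Matrix (Fin n) (Fin n) ℂ →ₗ[ℂ] Matrix (Fin n) (Fin n) ℂ |
            ∃ a b : Matrix (Fin n) (Fin n) ℂ,
              T = LinearMap.mulLeft ℂ a ∘ₗ A ∘ₗ LinearMap.mulLeft ℂ b}) : Set _))) :
    (∀ v ∈ Ut, ∑ p : Fin n × Fin n, ∑ q : Fin n × Fin n,
        (starRingEnd ℂ) ((∑ k, f k ⊗ₖ f k) p q) * v p q = 0) ∧
    (fun W => dmap f (flipT W)) '' Ut = Ut := by
  rcases Nat.eq_zero_or_pos n with hn0 | hn0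
  · subst hn0
    have hsub : ∀ X Y : Matrix (Fin 0 × Fin 0) (Fin 0 × Fin 0) ℂ, X = Y := by
      intro X Y; ext p q; exact p.1.elim0
    constructor
    · intro v _
      refine Finset.sum_eq_zero fun p _ => p.1.elim0
    · ext w
      constructor
      · rintro ⟨v, hv, rfl⟩
        show dmap f (flipT v) ∈ Ut
        rw [hsub (dmap f (flipT v)) v]
        exact hv
      · intro hw
        exact ⟨w, hw, hsub _ _⟩
  · have hn : (n : ℂ) ≠ 0 := Nat.cast_ne_zero.mpr hn0.ne'
    have htr : ∀ i j, Matrix.trace ((f i)ᴴ * f j) = if i = j then (n : ℂ) else 0 := by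
      intro i j
      have h := hON i j
      rw [div_eq_iff hn] at h
      rw [h]
      split <;> simp
    have hcomp := complete_f f hn htr
    obtain ⟨hA1, hA2, hA3cond, hA3⟩ := hA
    have hA3' : ∀ i p : Fin n, ∑ k, (A (eps i k)) p k = 0 := by
      intro i p
      have h3 := congrArg (fun M => M p i) (hA3 i i)
      simp only [Matrix.smul_apply, Matrix.sum_apply, Matrix.zero_apply, smul_eq_mul] at h3
      have h4 : ∀ k : Fin n, (A (eps i k) * eps k i) p i = (A (eps i k)) p k := by
        intro k
        rw [Matrix.mul_apply]
        have h5 : ∀ m : Fin n, (A (eps i k)) p m * eps k i m i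
            = if m = k then (A (eps i k)) p k else 0 := by
          intro m
          by_cases hm : m = k
          · subst hm
            simp [eps, Matrix.single]
          · simp [eps, Matrix.single, hm, Ne.symm hm]
        simp_rw [h5]
        simp [Finset.sum_ite_eq']
      simp_rw [h4] at h3
      exact (mul_eq_zero.mp h3).resolve_left hn
    have hL : ∀ T ∈ Submodule.span ℂ
        {T : Matrix (Fin n) (Fin n) ℂ →ₗ[ℂ] Matrix (Fin n) (Fin n) ℂ |
          ∃ a b : Matrix (Fin n) (Fin n) ℂ,
            T = LinearMap.mulLeft ℂ a ∘ₗ A ∘ₗ LinearMap.mulLeft ℂ b},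
        ∑ a', ∑ b', (T (eps a' b')) a' b' = 0 := by
      let L : (Matrix (Fin n) (Fin n) ℂ →ₗ[ℂ] Matrix (Fin n) (Fin n) ℂ) →ₗ[ℂ] ℂ :=
        { toFun := fun T => ∑ a', ∑ b', (T (eps a' b')) a' b'
          map_add' := by
            intro x y
            simp [LinearMap.add_apply, Matrix.add_apply, Finset.sum_add_distrib]
          map_smul' := by
            intro c x
            simp [LinearMap.smul_apply, Matrix.smul_apply, Finset.mul_sum] }
      intro T hT
      have hle : Submodule.span ℂ
          {T : Matrix (Fin n) (Fin n) ℂ →ₗ[ℂ] Matrix (Fin n) (Fin n) ℂ |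
            ∃ a b : Matrix (Fin n) (Fin n) ℂ,
              T = LinearMap.mulLeft ℂ a ∘ₗ A ∘ₗ LinearMap.mulLeft ℂ b} ≤ LinearMap.ker L := by
        rw [Submodule.span_le]
        rintro x ⟨a, b, rfl⟩
        exact gen_L A hA3' a b
      exact hle hT
    constructor
    · intro v hv
      rw [hUt] at hv
      obtain ⟨w, ⟨T, hT, rfl⟩, rfl⟩ := hv
      rw [phi_eq f hn hcomp D hD T, ell_eq f htr T, sum_diag f hcomp T, hL T hT,
        mul_zero, mul_zero]
    · have key : ∀ T ∈ Submodule.span ℂ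
          {T : Matrix (Fin n) (Fin n) ℂ →ₗ[ℂ] Matrix (Fin n) (Fin n) ℂ |
            ∃ a b : Matrix (Fin n) (Fin n) ℂ,
              T = LinearMap.mulLeft ℂ a ∘ₗ A ∘ₗ LinearMap.mulLeft ℂ b},
          ∃ T' ∈ Submodule.span ℂ
            {T : Matrix (Fin n) (Fin n) ℂ →ₗ[ℂ] Matrix (Fin n) (Fin n) ℂ |
              ∃ a b : Matrix (Fin n) (Fin n) ℂ,
                T = LinearMap.mulLeft ℂ a ∘ₗ A ∘ₗ LinearMap.mulLeft ℂ b},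
            dmap f (flipT (tensorFirst (fun x => D x) (Psi n ⇑T)))
              = tensorFirst (fun x => D x) (Psi n ⇑T') := by
        intro T hT
        induction hT using Submodule.span_induction with
        | mem x hx =>
          obtain ⟨p, q, rfl⟩ := hx
          refine ⟨LinearMap.mulLeft ℂ qᴴ ∘ₗ A ∘ₗ LinearMap.mulLeft ℂ pᴴ,
            Submodule.subset_span ⟨qᴴ, pᴴ, rfl⟩, ?_⟩
          rw [phi_eq f hn hcomp D hD, phi_eq f hn hcomp D hD,
            dmap_flip_sum f hn htr hcomp, kron_sum_exp f hn hcomp]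
          refine Finset.sum_congr rfl fun i _ => Finset.sum_congr rfl fun j _ => ?_
          congr 1
          simp only [LinearMap.comp_apply, LinearMap.mulLeft_apply]
          exact gen_star hn A hA1 p q (f i) (f j)
        | zero =>
          refine ⟨0, Submodule.zero_mem _, ?_⟩
          rw [phi_eq f hn hcomp D hD, dmap_flip_sum f hn htr hcomp]
          simp
        | add x y hx hy ihx ihy =>
          obtain ⟨T1, hT1, e1⟩ := ihx
          obtain ⟨T2, hT2, e2⟩ := ihy
          refine ⟨T1 + T2, Submodule.add_mem _ hT1 hT2, ?_⟩
          have hpadd : ∀ u v : Matrix (Fin n) (Fin n) ℂ →ₗ[ℂ] Matrix (Fin n) (Fin n) ℂ,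
              tensorFirst (fun x => D x) (Psi n ⇑(u + v))
                = tensorFirst (fun x => D x) (Psi n ⇑u) + tensorFirst (fun x => D x) (Psi n ⇑v) := by
            intro u v
            rw [phi_eq f hn hcomp D hD, phi_eq f hn hcomp D hD, phi_eq f hn hcomp D hD]
            ext P Q
            simp [Matrix.sum_apply, Matrix.kroneckerMap_apply, LinearMap.add_apply,
              Matrix.add_apply, mul_add, Finset.sum_add_distrib]
          rw [hpadd x y, flipT_add, dmap_add, e1, e2, hpadd T1 T2]
        | smul c x hx ihx =>
          obtain ⟨T1, hT1, e1⟩ := ihx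
          refine ⟨(starRingEnd ℂ) c • T1, Submodule.smul_mem _ _ hT1, ?_⟩
          have hpsmul : ∀ (d : ℂ) (u : Matrix (Fin n) (Fin n) ℂ →ₗ[ℂ] Matrix (Fin n) (Fin n) ℂ),
              tensorFirst (fun x => D x) (Psi n ⇑(d • u))
                = d • tensorFirst (fun x => D x) (Psi n ⇑u) := by
            intro d u
            rw [phi_eq f hn hcomp D hD, phi_eq f hn hcomp D hD]
            ext P Q
            simp only [Matrix.sum_apply, Matrix.smul_apply, Matrix.kroneckerMap_apply,
              LinearMap.smul_apply, smul_eq_mul, Finset.mul_sum]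
            exact Finset.sum_congr rfl fun m _ => by ring
          rw [hpsmul c x, flipT_smul, dmap_smul, e1, hpsmul ((starRingEnd ℂ) c) T1]
      have hinvol := dmap_flip_invol f hn htr hcomp
      rw [hUt]
      ext w
      constructor
      · rintro ⟨v, hv, rfl⟩
        obtain ⟨w2, ⟨T, hT, rfl⟩, rfl⟩ := hv
        obtain ⟨T', hT', e⟩ := key T hT
        show dmap f (flipT (tensorFirst (fun x => D x) (Psi n ⇑T))) ∈ _
        rw [e]
        exact ⟨Psi n ⇑T', ⟨T', hT', rfl⟩, rfl⟩
      · rintro ⟨w2, ⟨T, hT, rfl⟩, rfl⟩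
        obtain ⟨T', hT', e⟩ := key T hT
        refine ⟨tensorFirst (fun x => D x) (Psi n ⇑T'), ⟨Psi n ⇑T', ⟨T', hT', rfl⟩, rfl⟩, ?_⟩
        show dmap f (flipT (tensorFirst (fun x => D x) (Psi n ⇑T'))) = _
        rw [← e, hinvol]
end
end
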